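/- arXiv:2007.02186 — 6 statements merged into one kernel-verified Lean document; each statement's English description precedes it below -/
import Mathlib

section
/- Let m ≥ 2, let H be a subgroup of the symmetric group S_m containing equally many even and odd permutations, and let f1 : (ℝ^{d1})^m → [0,∞), f2 : (ℝ^{d2})^m → [0,∞) be measurable kernel functions. Let X1 and X2 be independent random vectors in ℝ^{d1} and ℝ^{d2}, let (X_{1i}, X_{2i}), i = 1,…,m, be independent copies of (X1, X2), and assume E[f_k(X_{k1},…,X_{km})] < ∞ for k = 1,2. Then the generalized symmetric covariance vanishes: μ_{f1,f2,H}(X1, X2) = 0. -/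
open MeasureTheory

/-- Sign-weighted sum of kernel evaluations over a finite set of permutations:
`∑_{σ ∈ H} sgn(σ) f (x_{σ(1)}, …, x_{σ(m)})`. -/
noncomputable def permSum {m : ℕ} {E : Type*} (H : Finset (Equiv.Perm (Fin m)))
    (f : (Fin m → E) → ℝ) (x : Fin m → E) : ℝ :=
  ∑ σ ∈ H, ((Equiv.Perm.sign σ : ℤ) : ℝ) * f (fun i => x (σ i))

/-- The dependence kernel `k_{f1,f2,H}`. -/
noncomputable def depKernel {m : ℕ} {E1 E2 : Type*} (H : Finset (Equiv.Perm (Fin m)))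
    (f1 : (Fin m → E1) → ℝ) (f2 : (Fin m → E2) → ℝ) (z : Fin m → E1 × E2) : ℝ :=
  permSum H f1 (fun i => (z i).1) * permSum H f2 (fun i => (z i).2)

/-- The generalized symmetric covariance `μ_{f1,f2,H}` of a joint law `μ` on `E1 × E2`:
the expectation of the dependence kernel evaluated at `m` independent copies of the pair,
i.e. the integral against the `m`-fold product measure. -/
noncomputable def gsc {m : ℕ} {E1 E2 : Type*} [MeasurableSpace E1] [MeasurableSpace E2]
    (H : Finset (Equiv.Perm (Fin m)))
    (f1 : (Fin m → E1) → ℝ) (f2 : (Fin m → E2) → ℝ) (μ : Measure (E1 × E2)) : ℝ :=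
  ∫ z, depKernel H f1 f2 z ∂(Measure.pi fun _ : Fin m => μ)

lemma sum_sign_eq_zero {m : ℕ} (H : Finset (Equiv.Perm (Fin m)))
    (hH_parity : (H.filter fun σ => Equiv.Perm.sign σ = 1).card
      = (H.filter fun σ => Equiv.Perm.sign σ = -1).card) :
    ∑ σ ∈ H, ((Equiv.Perm.sign σ : ℤ) : ℝ) = 0 := by
  classical
  rw [← Finset.sum_filter_add_sum_filter_not H (fun σ => Equiv.Perm.sign σ = 1)]
  have h1 : ∑ σ ∈ H.filter (fun σ => Equiv.Perm.sign σ = 1),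
      ((Equiv.Perm.sign σ : ℤ) : ℝ) = (H.filter fun σ => Equiv.Perm.sign σ = 1).card := by
    rw [Finset.sum_congr rfl (fun σ hσ => ?_), Finset.sum_const, nsmul_eq_mul, mul_one]
    rw [(Finset.mem_filter.mp hσ).2]; norm_num
  have h2 : ∑ σ ∈ H.filter (fun σ => ¬ Equiv.Perm.sign σ = 1),
      ((Equiv.Perm.sign σ : ℤ) : ℝ)
      = -(H.filter fun σ => Equiv.Perm.sign σ = -1).card := by
    have hfe : H.filter (fun σ => ¬ Equiv.Perm.sign σ = 1)
        = H.filter (fun σ => Equiv.Perm.sign σ = -1) := by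
      apply Finset.filter_congr
      intro σ _
      rcases Int.units_eq_one_or (Equiv.Perm.sign σ) with h | h <;> simp [h]
    rw [hfe, Finset.sum_congr rfl (fun σ hσ => ?_), Finset.sum_const, nsmul_eq_mul, mul_neg_one]
    rw [(Finset.mem_filter.mp hσ).2]; norm_num
  rw [h1, h2, hH_parity]; ring

lemma integral_permSum_eq_zero {m : ℕ} {E : Type*} [MeasurableSpace E]
    (H : Finset (Equiv.Perm (Fin m)))
    (hH_parity : (H.filter fun σ => Equiv.Perm.sign σ = 1).card
      = (H.filter fun σ => Equiv.Perm.sign σ = -1).card)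
    (f : (Fin m → E) → ℝ) (μ : Measure E) [IsProbabilityMeasure μ]
    (hf_int : Integrable f (Measure.pi fun _ : Fin m => μ)) :
    ∫ x, permSum H f x ∂(Measure.pi fun _ : Fin m => μ) = 0 := by
  have key : ∀ σ : Equiv.Perm (Fin m),
      ∫ x, f (fun i => x (σ i)) ∂(Measure.pi fun _ : Fin m => μ)
        = ∫ x, f x ∂(Measure.pi fun _ : Fin m => μ) := by
    intro σ
    have hmp := measurePreserving_piCongrLeft (fun _ : Fin m => μ) σ.symm
    have := hmp.integral_comp' f
    rw [← this]
    congr 1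
    ext x
    congr 1
    ext i
    simp [MeasurableEquiv.coe_piCongrLeft, Equiv.piCongrLeft_apply]
  have hint : ∀ σ : Equiv.Perm (Fin m),
      Integrable (fun x => f (fun i => x (σ i))) (Measure.pi fun _ : Fin m => μ) := by
    intro σ
    have hmp := measurePreserving_piCongrLeft (fun _ : Fin m => μ) σ.symm
    have h := (hmp.integrable_comp_emb
      (MeasurableEquiv.piCongrLeft (fun _ : Fin m => E) σ.symm).measurableEmbedding).mpr hf_int
    convert h using 1
    ext x
    simp only [Function.comp_apply]
    congr 1
    ext i
    simp [MeasurableEquiv.coe_piCongrLeft, Equiv.piCongrLeft_apply]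
  unfold permSum
  rw [integral_finset_sum _ (fun σ _ => (hint σ).const_mul _)]
  simp_rw [integral_const_mul, key]
  rw [← Finset.sum_mul, sum_sign_eq_zero H hH_parity, zero_mul]

/-- every GSC is a valid measure of dependence in the sense that it vanishes
under independence: if `H ⊆ S_m` is a subgroup with equally many even and odd permutations,
the kernels are nonnegative and measurable with finite expectation under i.i.d. sampling,
and the joint law of `(X1, X2)` is the product `μ1 ⊗ μ2` of its marginals (independence),
then `μ_{f1,f2,H}(X1,X2) = 0`. -/
theorem gsc_eq_zero_of_indep {d1 d2 m : ℕ} (hm : 2 ≤ m)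
    (H : Finset (Equiv.Perm (Fin m)))
    (hH_one : (1 : Equiv.Perm (Fin m)) ∈ H)
    (hH_mul : ∀ σ ∈ H, ∀ τ ∈ H, σ * τ ∈ H)
    (hH_inv : ∀ σ ∈ H, σ⁻¹ ∈ H)
    (hH_parity : (H.filter fun σ => Equiv.Perm.sign σ = 1).card
      = (H.filter fun σ => Equiv.Perm.sign σ = -1).card)
    (f1 : (Fin m → EuclideanSpace ℝ (Fin d1)) → ℝ)
    (f2 : (Fin m → EuclideanSpace ℝ (Fin d2)) → ℝ)
    (hf1_meas : Measurable f1) (hf2_meas : Measurable f2)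
    (hf1_nonneg : ∀ x, 0 ≤ f1 x) (hf2_nonneg : ∀ x, 0 ≤ f2 x)
    (μ1 : Measure (EuclideanSpace ℝ (Fin d1))) (μ2 : Measure (EuclideanSpace ℝ (Fin d2)))
    [IsProbabilityMeasure μ1] [IsProbabilityMeasure μ2]
    (hf1_int : Integrable f1 (Measure.pi fun _ : Fin m => μ1))
    (hf2_int : Integrable f2 (Measure.pi fun _ : Fin m => μ2)) :
    gsc H f1 f2 (μ1.prod μ2) = 0 := by
  have hmp := measurePreserving_arrowProdEquivProdArrow
    (EuclideanSpace ℝ (Fin d1)) (EuclideanSpace ℝ (Fin d2)) (Fin m)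
    (fun _ => μ1) (fun _ => μ2)
  unfold gsc
  have heq : ∫ z, depKernel H f1 f2 z ∂(Measure.pi fun _ : Fin m => μ1.prod μ2)
      = ∫ z, (fun p : (Fin m → EuclideanSpace ℝ (Fin d1)) ×
          (Fin m → EuclideanSpace ℝ (Fin d2)) =>
          permSum H f1 p.1 * permSum H f2 p.2)
          (MeasurableEquiv.arrowProdEquivProdArrow
            (EuclideanSpace ℝ (Fin d1)) (EuclideanSpace ℝ (Fin d2)) (Fin m) z)
          ∂(Measure.pi fun _ : Fin m => μ1.prod μ2) := by
    apply integral_congr_ae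
    filter_upwards with z
    simp [depKernel, MeasurableEquiv.arrowProdEquivProdArrow, Equiv.arrowProdEquivProdArrow]
  rw [heq, hmp.integral_comp' (fun p : (Fin m → EuclideanSpace ℝ (Fin d1)) ×
      (Fin m → EuclideanSpace ℝ (Fin d2)) => permSum H f1 p.1 * permSum H f2 p.2)]
  rw [integral_prod_mul (permSum H f1) (permSum H f2)]
  rw [integral_permSum_eq_zero H hH_parity f1 μ1 hf1_int, zero_mul]
end

section
/- Let X1 and X2 be random vectors in ℝ^{d1} and ℝ^{d2} whose joint distribution is absolutely continuous with respect to Lebesgue measure on ℝ^{d1+d2}, and let (X_{1i}, X_{2i}), i = 1,…,5, be independent copies of (X1, X2). Then E[ ∏_{k=1}^{2} (1/2){ 1(X_{k1}, X_{k2} ⪯ X_{k5}) − 1(X_{k1}, X_{k3} ⪯ X_{k5}) − 1(X_{k4}, X_{k2} ⪯ X_{k5}) + 1(X_{k4}, X_{k3} ⪯ X_{k5}) } ] = E[ ( F_{(X1,X2)}(X_{15}, X_{25}) − F_{X1}(X_{15}) F_{X2}(X_{25}) )² ], which is nonnegative and equals 0 if and only if X1 and X2 are independent. -/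
open MeasureTheory Set Filter Metric Topology
open scoped ENNReal NNReal

/-- Real-valued indicator of a proposition. -/
noncomputable def ind (p : Prop) : ℝ :=
  letI := Classical.propDecidable p
  if p then 1 else 0

namespace HoeffD


lemma ind_of (p : Prop) [Decidable p] : ind p = if p then 1 else 0 := by
  unfold ind; congr

lemma ind_true {p : Prop} (h : p) : ind p = 1 := by
  classical rw [ind_of, if_pos h]

lemma ind_false {p : Prop} (h : ¬ p) : ind p = 0 := by
  classical rw [ind_of, if_neg h]

lemma ind_nonneg (p : Prop) : 0 ≤ ind p := by
  classical rw [ind_of]; split <;> norm_num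

lemma ind_le_one (p : Prop) : ind p ≤ 1 := by
  classical rw [ind_of]; split <;> norm_num

lemma ind_and (p q : Prop) : ind (p ∧ q) = ind p * ind q := by
  classical
  by_cases hp : p <;> by_cases hq : q <;>
    simp [ind_true, ind_false, hp, hq, ind_true (And.intro hp hq)]

lemma abs_ind_sub_ind (p q : Prop) : |ind p - ind q| ≤ 1 := by
  classical
  by_cases hp : p <;> by_cases hq : q <;> simp [ind_true, ind_false, hp, hq]

lemma ind_eq_indicator {X : Type*} (p : X → Prop) :
    (fun x => ind (p x)) = Set.indicator {x | p x} (fun _ => (1:ℝ)) := by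
  classical
  funext x
  by_cases h : p x
  · rw [ind_true h, Set.indicator_of_mem (show x ∈ {x | p x} from h)]
  · rw [ind_false h, Set.indicator_of_notMem (show x ∉ {x | p x} from h)]

variable {X : Type*} [MeasurableSpace X]

lemma measurable_ind {p : X → Prop} (hp : MeasurableSet {x | p x}) :
    Measurable fun x => ind (p x) := by
  rw [ind_eq_indicator]
  exact (measurable_const.indicator hp)

lemma integrable_ind (m : Measure X) [IsFiniteMeasure m] {p : X → Prop}
    (hp : MeasurableSet {x | p x}) : Integrable (fun x => ind (p x)) m := by
  rw [ind_eq_indicator]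
  exact (integrable_const (1:ℝ)).indicator hp

lemma integral_ind (m : Measure X) [IsFiniteMeasure m] {p : X → Prop}
    (hp : MeasurableSet {x | p x}) : ∫ x, ind (p x) ∂m = (m {x | p x}).toReal := by
  rw [ind_eq_indicator]
  exact integral_indicator_one hp

/-- Fubini for a product of four single-coordinate functions. -/
lemma int4 (m : Measure X) [IsProbabilityMeasure m] (f g h k : X → ℝ) :
    ∫ y : Fin 4 → X, f (y 0) * g (y 1) * h (y 2) * k (y 3) ∂(Measure.pi fun _ => m)
      = (∫ x, f x ∂m) * (∫ x, g x ∂m) * (∫ x, h x ∂m) * (∫ x, k x ∂m) := by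
  letI : MeasureSpace X := ⟨m⟩
  haveI : SigmaFinite (volume : Measure X) := inferInstanceAs (SigmaFinite m)
  have h1 : (fun y : Fin 4 → X => f (y 0) * g (y 1) * h (y 2) * k (y 3))
      = fun y : Fin 4 → X => ∏ i : Fin 4, ![f, g, h, k] i (y i) := by
    funext y
    rw [Fin.prod_univ_four]
    simp [Matrix.cons_val_zero, Matrix.cons_val_one]
  have h2 : (Measure.pi fun _ : Fin 4 => m) = (volume : Measure (Fin 4 → X)) := rfl
  rw [h1, h2]
  have := MeasureTheory.integral_fin_nat_prod_eq_prod (E := fun _ : Fin 4 => X) (μ := fun _ => (volume : Measure X)) ![f, g, h, k]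
  refine this.trans ?_
  rw [Fin.prod_univ_four]
  rfl


section Acore

/-- The core 4-fold integral computation. -/
lemma Acore (m : Measure X) [IsProbabilityMeasure m] (p q : X → Prop)
    (hp : MeasurableSet {x | p x}) (hq : MeasurableSet {x | q x}) :
    ∫ y : Fin 4 → X,
        ((ind (p (y 0)) - ind (p (y 3))) * (ind (p (y 1)) - ind (p (y 2)))) *
        ((ind (q (y 0)) - ind (q (y 3))) * (ind (q (y 1)) - ind (q (y 2))))
        ∂(Measure.pi fun _ => m)
      = 4 * ((m {x | p x ∧ q x}).toReal
          - (m {x | p x}).toReal * (m {x | q x}).toReal) ^ 2 := by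
  classical
  set P : X → ℝ := fun x => ind (p x) with hP
  set Q : X → ℝ := fun x => ind (q x) with hQ
  set a : ℝ := (m {x | p x}).toReal with ha
  set b : ℝ := (m {x | q x}).toReal with hb
  set c : ℝ := (m {x | p x ∧ q x}).toReal with hc
  have hia : ∫ x, P x ∂m = a := integral_ind m hp
  have hib : ∫ x, Q x ∂m = b := integral_ind m hq
  have hPQ : (fun x => P x * Q x) = fun x => ind (p x ∧ q x) := by
    funext x; rw [ind_and]
  have hpq : MeasurableSet {x | p x ∧ q x} := by
    have : {x | p x ∧ q x} = {x | p x} ∩ {x | q x} := rfl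
    rw [this]; exact hp.inter hq
  have hic : ∫ x, P x * Q x ∂m = c := by rw [hPQ]; exact integral_ind m hpq
  have hione : ∫ _ : X, (1:ℝ) ∂m = 1 := by simp
  set PQ : X → ℝ := fun x => P x * Q x with hPQdef
  set one : X → ℝ := fun _ : X => (1:ℝ) with honedef
  have hic' : ∫ x, PQ x ∂m = c := hic
  have hione' : ∫ x, one x ∂m = 1 := hione
  -- index data
  let j1 : Bool → Fin 4 := fun s => cond s 3 0
  let j2 : Bool → Fin 4 := fun s => cond s 2 1
  let sg : Bool → ℝ := fun s => cond s (-1) 1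
  let T : (Bool × Bool) × (Bool × Bool) → (Fin 4 → X) → ℝ := fun e y =>
    (sg e.1.1 * sg e.1.2 * sg e.2.1 * sg e.2.2) *
      (P (y (j1 e.1.1)) * P (y (j2 e.1.2)) * Q (y (j1 e.2.1)) * Q (y (j2 e.2.2)))
  have hpt : (fun y : Fin 4 → X =>
      ((P (y 0) - P (y 3)) * (P (y 1) - P (y 2))) *
      ((Q (y 0) - Q (y 3)) * (Q (y 1) - Q (y 2))))
      = fun y => ∑ e : (Bool × Bool) × (Bool × Bool), T e y := by
    funext y
    simp only [T, j1, j2, sg, Fintype.sum_prod_type, Fintype.sum_bool, Bool.cond_true,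
      Bool.cond_false]
    ring
  have hPm : Measurable P := measurable_ind hp
  have hQm : Measurable Q := measurable_ind hq
  have hTint : ∀ e : (Bool × Bool) × (Bool × Bool),
      Integrable (T e) (Measure.pi fun _ => m) := by
    intro e
    have hmeas : Measurable (T e) := by
      apply Measurable.const_mul
      exact (((hPm.comp (measurable_pi_apply _)).mul
        (hPm.comp (measurable_pi_apply _))).mul
        (hQm.comp (measurable_pi_apply _))).mul
        (hQm.comp (measurable_pi_apply _))
    refine ⟨hmeas.aestronglyMeasurable, HasFiniteIntegral.of_bounded (C := 1) ?_⟩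
    refine Filter.Eventually.of_forall (fun y => ?_)
    have hsg : ∀ s : Bool, |sg s| = 1 := by intro s; cases s <;> simp [sg]
    have h01 : ∀ r : Prop, |ind r| ≤ 1 := by
      intro r
      rw [abs_of_nonneg (ind_nonneg r)]; exact ind_le_one r
    have hPa : ∀ z : X, |P z| ≤ 1 := fun z => h01 (p z)
    have hQa : ∀ z : X, |Q z| ≤ 1 := fun z => h01 (q z)
    simp only [T, Real.norm_eq_abs, abs_mul, hsg, one_mul]
    have h4 : ∀ r1 r2 r3 r4 : ℝ, |r1| ≤ 1 → |r2| ≤ 1 → |r3| ≤ 1 → |r4| ≤ 1 →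
        |r1| * |r2| * |r3| * |r4| ≤ 1 := by
      intro r1 r2 r3 r4 h1 h2 h3 h4
      exact mul_le_one₀ (mul_le_one₀ (mul_le_one₀ h1 (abs_nonneg r2) h2)
        (abs_nonneg r3) h3) (abs_nonneg r4) h4
    exact h4 _ _ _ _ (hPa _) (hPa _) (hQa _) (hQa _)
  rw [hpt, integral_finset_sum _ (fun e _ => hTint e)]
  -- evaluate each of the 16 integrals
  have hval : ∀ e : (Bool × Bool) × (Bool × Bool),
      ∫ y, T e y ∂(Measure.pi fun _ => m)
        = (sg e.1.1 * sg e.1.2 * sg e.2.1 * sg e.2.2) *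
          ((if e.1.1 = e.2.1 then c else a * b) * (if e.1.2 = e.2.2 then c else a * b)) := by
    rintro ⟨⟨s1, s2⟩, ⟨s3, s4⟩⟩
    cases s1 <;> cases s2 <;> cases s3 <;> cases s4 <;>
      simp only [T, j1, j2, sg, Bool.cond_true, Bool.cond_false]
    · have e1 : (fun y : Fin 4 → X => P (y 0) * P (y 1) * Q (y 0) * Q (y 1))
          = fun y : Fin 4 → X => PQ (y 0) * PQ (y 1) * one (y 2) * one (y 3) := by
        funext y; try simp only [PQ, one]
        ring
      rw [integral_const_mul, e1, int4 m PQ PQ one one, hic', hione']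
      norm_num
      try ring
    · have e1 : (fun y : Fin 4 → X => P (y 0) * P (y 1) * Q (y 0) * Q (y 2))
          = fun y : Fin 4 → X => PQ (y 0) * P (y 1) * Q (y 2) * one (y 3) := by
        funext y; try simp only [PQ, one]
        ring
      rw [integral_const_mul, e1, int4 m PQ P Q one, hic', hia, hib, hione']
      norm_num
      try ring
    · have e1 : (fun y : Fin 4 → X => P (y 0) * P (y 1) * Q (y 3) * Q (y 1))
          = fun y : Fin 4 → X => P (y 0) * PQ (y 1) * one (y 2) * Q (y 3) := by
        funext y; try simp only [PQ, one]
        ring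
      rw [integral_const_mul, e1, int4 m P PQ one Q, hia, hic', hione', hib]
      norm_num
      try ring
    · have e1 : (fun y : Fin 4 → X => P (y 0) * P (y 1) * Q (y 3) * Q (y 2))
          = fun y : Fin 4 → X => P (y 0) * P (y 1) * Q (y 2) * Q (y 3) := by
        funext y; try simp only [PQ, one]
        ring
      rw [integral_const_mul, e1, int4 m P P Q Q, hia, hib]
      norm_num
      try ring
    · have e1 : (fun y : Fin 4 → X => P (y 0) * P (y 2) * Q (y 0) * Q (y 1))
          = fun y : Fin 4 → X => PQ (y 0) * Q (y 1) * P (y 2) * one (y 3) := by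
        funext y; try simp only [PQ, one]
        ring
      rw [integral_const_mul, e1, int4 m PQ Q P one, hic', hib, hia, hione']
      norm_num
      try ring
    · have e1 : (fun y : Fin 4 → X => P (y 0) * P (y 2) * Q (y 0) * Q (y 2))
          = fun y : Fin 4 → X => PQ (y 0) * one (y 1) * PQ (y 2) * one (y 3) := by
        funext y; try simp only [PQ, one]
        ring
      rw [integral_const_mul, e1, int4 m PQ one PQ one, hic', hione']
      norm_num
      try ring
    · have e1 : (fun y : Fin 4 → X => P (y 0) * P (y 2) * Q (y 3) * Q (y 1))
          = fun y : Fin 4 → X => P (y 0) * Q (y 1) * P (y 2) * Q (y 3) := by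
        funext y; try simp only [PQ, one]
        ring
      rw [integral_const_mul, e1, int4 m P Q P Q, hia, hib]
      norm_num
      try ring
    · have e1 : (fun y : Fin 4 → X => P (y 0) * P (y 2) * Q (y 3) * Q (y 2))
          = fun y : Fin 4 → X => P (y 0) * one (y 1) * PQ (y 2) * Q (y 3) := by
        funext y; try simp only [PQ, one]
        ring
      rw [integral_const_mul, e1, int4 m P one PQ Q, hia, hione', hic', hib]
      norm_num
      try ring
    · have e1 : (fun y : Fin 4 → X => P (y 3) * P (y 1) * Q (y 0) * Q (y 1))
          = fun y : Fin 4 → X => Q (y 0) * PQ (y 1) * one (y 2) * P (y 3) := by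
        funext y; try simp only [PQ, one]
        ring
      rw [integral_const_mul, e1, int4 m Q PQ one P, hib, hic', hione', hia]
      norm_num
      try ring
    · have e1 : (fun y : Fin 4 → X => P (y 3) * P (y 1) * Q (y 0) * Q (y 2))
          = fun y : Fin 4 → X => Q (y 0) * P (y 1) * Q (y 2) * P (y 3) := by
        funext y; try simp only [PQ, one]
        ring
      rw [integral_const_mul, e1, int4 m Q P Q P, hib, hia]
      norm_num
      try ring
    · have e1 : (fun y : Fin 4 → X => P (y 3) * P (y 1) * Q (y 3) * Q (y 1))
          = fun y : Fin 4 → X => one (y 0) * PQ (y 1) * one (y 2) * PQ (y 3) := by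
        funext y; try simp only [PQ, one]
        ring
      rw [integral_const_mul, e1, int4 m one PQ one PQ, hione', hic']
      norm_num
      try ring
    · have e1 : (fun y : Fin 4 → X => P (y 3) * P (y 1) * Q (y 3) * Q (y 2))
          = fun y : Fin 4 → X => one (y 0) * P (y 1) * Q (y 2) * PQ (y 3) := by
        funext y; try simp only [PQ, one]
        ring
      rw [integral_const_mul, e1, int4 m one P Q PQ, hione', hia, hib, hic']
      norm_num
      try ring
    · have e1 : (fun y : Fin 4 → X => P (y 3) * P (y 2) * Q (y 0) * Q (y 1))
          = fun y : Fin 4 → X => Q (y 0) * Q (y 1) * P (y 2) * P (y 3) := by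
        funext y; try simp only [PQ, one]
        ring
      rw [integral_const_mul, e1, int4 m Q Q P P, hib, hia]
      norm_num
      try ring
    · have e1 : (fun y : Fin 4 → X => P (y 3) * P (y 2) * Q (y 0) * Q (y 2))
          = fun y : Fin 4 → X => Q (y 0) * one (y 1) * PQ (y 2) * P (y 3) := by
        funext y; try simp only [PQ, one]
        ring
      rw [integral_const_mul, e1, int4 m Q one PQ P, hib, hione', hic', hia]
      norm_num
      try ring
    · have e1 : (fun y : Fin 4 → X => P (y 3) * P (y 2) * Q (y 3) * Q (y 1))
          = fun y : Fin 4 → X => one (y 0) * Q (y 1) * P (y 2) * PQ (y 3) := by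
        funext y; try simp only [PQ, one]
        ring
      rw [integral_const_mul, e1, int4 m one Q P PQ, hione', hib, hia, hic']
      norm_num
      try ring
    · have e1 : (fun y : Fin 4 → X => P (y 3) * P (y 2) * Q (y 3) * Q (y 2))
          = fun y : Fin 4 → X => one (y 0) * one (y 1) * PQ (y 2) * PQ (y 3) := by
        funext y; try simp only [PQ, one]
        ring
      rw [integral_const_mul, e1, int4 m one one PQ PQ, hione', hic']
      norm_num
      try ring
  rw [Finset.sum_congr rfl (fun e _ => hval e)]
  simp only [Fintype.sum_prod_type, Fintype.sum_bool, sg, Bool.cond_true, Bool.cond_false]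
  norm_num
  ring

end Acore


lemma half_expand (P0 P1 P2 P3 : Prop) :
    1/2 * (ind (P0 ∧ P1) - ind (P0 ∧ P2) - ind (P3 ∧ P1) + ind (P3 ∧ P2))
      = 1/2 * ((ind P0 - ind P3) * (ind P1 - ind P2)) := by
  rw [ind_and, ind_and, ind_and, ind_and]; ring

lemma abs_half_expand_le (P0 P1 P2 P3 : Prop) :
    |1/2 * ((ind P0 - ind P3) * (ind P1 - ind P2))| ≤ 1 := by
  rw [abs_mul, abs_mul]
  have h1 := abs_ind_sub_ind P0 P3
  have h2 := abs_ind_sub_ind P1 P2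
  have n1 := abs_nonneg (ind P0 - ind P3)
  have n2 := abs_nonneg (ind P1 - ind P2)
  have : |(1:ℝ)/2| = 1/2 := by norm_num
  rw [this]
  nlinarith

lemma measurableSet_le_pi {β : Type*} [MeasurableSpace β] {d : ℕ} {f g : β → (Fin d → ℝ)}
    (hf : Measurable f) (hg : Measurable g) : MeasurableSet {x | f x ≤ g x} := by
  have h : {x | f x ≤ g x} = ⋂ i, {x | f x i ≤ g x i} := by
    ext x; simp [Pi.le_def]
  rw [h]
  exact MeasurableSet.iInter fun i =>
    measurableSet_le ((measurable_pi_apply i).comp hf) ((measurable_pi_apply i).comp hg)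

section PartA

variable {d1 d2 : ℕ}

local notation "Ω" => (Fin d1 → ℝ) × (Fin d2 → ℝ)

lemma partA (μ : Measure Ω) [IsProbabilityMeasure μ] :
    (∫ x : Fin 5 → Ω, ((1 / 2 : ℝ)
          * (ind ((x 0).1 ≤ (x 4).1 ∧ (x 1).1 ≤ (x 4).1)
            - ind ((x 0).1 ≤ (x 4).1 ∧ (x 2).1 ≤ (x 4).1)
            - ind ((x 3).1 ≤ (x 4).1 ∧ (x 1).1 ≤ (x 4).1)
            + ind ((x 3).1 ≤ (x 4).1 ∧ (x 2).1 ≤ (x 4).1)))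
        * ((1 / 2 : ℝ)
          * (ind ((x 0).2 ≤ (x 4).2 ∧ (x 1).2 ≤ (x 4).2)
            - ind ((x 0).2 ≤ (x 4).2 ∧ (x 2).2 ≤ (x 4).2)
            - ind ((x 3).2 ≤ (x 4).2 ∧ (x 1).2 ≤ (x 4).2)
            + ind ((x 3).2 ≤ (x 4).2 ∧ (x 2).2 ≤ (x 4).2)))
        ∂(Measure.pi fun _ : Fin 5 => μ))
      = ∫ z, ((μ {w | w.1 ≤ z.1 ∧ w.2 ≤ z.2}).toReal
          - (μ {w | w.1 ≤ z.1}).toReal * (μ {w | w.2 ≤ z.2}).toReal) ^ 2 ∂μ := by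
  classical
  set g : Ω × (Fin 4 → Ω) → ℝ := fun zy =>
    (1/2 * ((ind ((zy.2 0).1 ≤ zy.1.1) - ind ((zy.2 3).1 ≤ zy.1.1))
      * (ind ((zy.2 1).1 ≤ zy.1.1) - ind ((zy.2 2).1 ≤ zy.1.1))))
    * (1/2 * ((ind ((zy.2 0).2 ≤ zy.1.2) - ind ((zy.2 3).2 ≤ zy.1.2))
      * (ind ((zy.2 1).2 ≤ zy.1.2) - ind ((zy.2 2).2 ≤ zy.1.2)))) with hg
  have h40 : (4:Fin 5).succAbove 0 = 0 := by decide
  have h41 : (4:Fin 5).succAbove 1 = 1 := by decide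
  have h42 : (4:Fin 5).succAbove 2 = 2 := by decide
  have h43 : (4:Fin 5).succAbove 3 = 3 := by decide
  have step1 : ∀ x : Fin 5 → Ω, ((1 / 2 : ℝ)
          * (ind ((x 0).1 ≤ (x 4).1 ∧ (x 1).1 ≤ (x 4).1)
            - ind ((x 0).1 ≤ (x 4).1 ∧ (x 2).1 ≤ (x 4).1)
            - ind ((x 3).1 ≤ (x 4).1 ∧ (x 1).1 ≤ (x 4).1)
            + ind ((x 3).1 ≤ (x 4).1 ∧ (x 2).1 ≤ (x 4).1)))
        * ((1 / 2 : ℝ)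
          * (ind ((x 0).2 ≤ (x 4).2 ∧ (x 1).2 ≤ (x 4).2)
            - ind ((x 0).2 ≤ (x 4).2 ∧ (x 2).2 ≤ (x 4).2)
            - ind ((x 3).2 ≤ (x 4).2 ∧ (x 1).2 ≤ (x 4).2)
            + ind ((x 3).2 ≤ (x 4).2 ∧ (x 2).2 ≤ (x 4).2)))
      = g ((MeasurableEquiv.piFinSuccAbove (fun _ : Fin 5 => Ω) 4) x) := by
    intro x
    have he : (MeasurableEquiv.piFinSuccAbove (fun _ : Fin 5 => Ω) 4) x
        = (x 4, fun j : Fin 4 => x ((4:Fin 5).succAbove j)) := rfl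
    rw [he, hg]
    simp only [h40, h41, h42, h43]
    rw [half_expand, half_expand]
  have hmg : Measurable g := by
    rw [hg]
    have hm1 : ∀ i : Fin 4, Measurable fun zy : Ω × (Fin 4 → Ω) => ind ((zy.2 i).1 ≤ zy.1.1) := by
      intro i
      exact measurable_ind (measurableSet_le_pi
        (measurable_fst.comp ((measurable_pi_apply i).comp measurable_snd))
        (measurable_fst.comp measurable_fst))
    have hm2 : ∀ i : Fin 4, Measurable fun zy : Ω × (Fin 4 → Ω) => ind ((zy.2 i).2 ≤ zy.1.2) := by
      intro i
      exact measurable_ind (measurableSet_le_pi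
        (measurable_snd.comp ((measurable_pi_apply i).comp measurable_snd))
        (measurable_snd.comp measurable_fst))
    exact ((((hm1 0).sub (hm1 3)).mul ((hm1 1).sub (hm1 2))).const_mul (1/2)).mul
      ((((hm2 0).sub (hm2 3)).mul ((hm2 1).sub (hm2 2))).const_mul (1/2))
  have hgint : Integrable g ((μ.prod (Measure.pi fun _ : Fin 4 => μ))) := by
    refine ⟨hmg.aestronglyMeasurable, HasFiniteIntegral.of_bounded (C := 1) ?_⟩
    refine Filter.Eventually.of_forall (fun zy => ?_)
    have h1 := abs_half_expand_le ((zy.2 0).1 ≤ zy.1.1) ((zy.2 1).1 ≤ zy.1.1)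
      ((zy.2 2).1 ≤ zy.1.1) ((zy.2 3).1 ≤ zy.1.1)
    have h2 := abs_half_expand_le ((zy.2 0).2 ≤ zy.1.2) ((zy.2 1).2 ≤ zy.1.2)
      ((zy.2 2).2 ≤ zy.1.2) ((zy.2 3).2 ≤ zy.1.2)
    have key : |(1/2 * ((ind ((zy.2 0).1 ≤ zy.1.1) - ind ((zy.2 3).1 ≤ zy.1.1))
      * (ind ((zy.2 1).1 ≤ zy.1.1) - ind ((zy.2 2).1 ≤ zy.1.1))))
      * (1/2 * ((ind ((zy.2 0).2 ≤ zy.1.2) - ind ((zy.2 3).2 ≤ zy.1.2))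
      * (ind ((zy.2 1).2 ≤ zy.1.2) - ind ((zy.2 2).2 ≤ zy.1.2))))| ≤ 1 := by
      rw [abs_mul]
      exact mul_le_one₀ h1 (abs_nonneg _) h2
    exact key
  calc (∫ x : Fin 5 → Ω, _ ∂(Measure.pi fun _ : Fin 5 => μ))
      = ∫ x : Fin 5 → Ω, g ((MeasurableEquiv.piFinSuccAbove (fun _ : Fin 5 => Ω) 4) x)
          ∂(Measure.pi fun _ : Fin 5 => μ) := by rw [funext step1]
    _ = ∫ p, g p ∂(μ.prod (Measure.pi fun _ : Fin 4 => μ)) := by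
        exact (measurePreserving_piFinSuccAbove (fun _ : Fin 5 => μ) 4).integral_comp
          (MeasurableEquiv.measurableEmbedding _) g
    _ = ∫ z, ∫ y, g (z, y) ∂(Measure.pi fun _ : Fin 4 => μ) ∂μ := integral_prod g hgint
    _ = ∫ z, ((μ {w | w.1 ≤ z.1 ∧ w.2 ≤ z.2}).toReal
          - (μ {w | w.1 ≤ z.1}).toReal * (μ {w | w.2 ≤ z.2}).toReal) ^ 2 ∂μ := by
        refine integral_congr_ae (Filter.Eventually.of_forall (fun z => ?_))
        have hp : MeasurableSet {w : Ω | w.1 ≤ z.1} :=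
          measurableSet_le_pi measurable_fst measurable_const
        have hq : MeasurableSet {w : Ω | w.2 ≤ z.2} :=
          measurableSet_le_pi measurable_snd measurable_const
        have hA := Acore μ (fun w : Ω => w.1 ≤ z.1) (fun w : Ω => w.2 ≤ z.2) hp hq
        have hfun : (fun y : Fin 4 → Ω => g (z, y))
            = fun y : Fin 4 → Ω => (1/4 : ℝ) *
              (((ind ((y 0).1 ≤ z.1) - ind ((y 3).1 ≤ z.1))
                  * (ind ((y 1).1 ≤ z.1) - ind ((y 2).1 ≤ z.1))) *
               ((ind ((y 0).2 ≤ z.2) - ind ((y 3).2 ≤ z.2))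
                  * (ind ((y 1).2 ≤ z.2) - ind ((y 2).2 ≤ z.2)))) := by
          funext y; rw [hg]; ring
        show ∫ y, g (z, y) ∂(Measure.pi fun _ : Fin 4 => μ) = _
        rw [hfun, integral_const_mul, hA]
        ring

end PartA




lemma ind_congr {p q : Prop} (h : p ↔ q) : ind p = ind q := by
  classical
  by_cases hp : p
  · rw [ind_true hp, ind_true (h.1 hp)]
  · rw [ind_false hp, ind_false (fun hq => hp (h.2 hq))]

lemma ind_prod {ι : Type*} (s : Finset ι) (p : ι → Prop) :
    ∏ i ∈ s, ind (p i) = ind (∀ i ∈ s, p i) := by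
  classical
  by_cases h : ∀ i ∈ s, p i
  · rw [ind_true h]
    exact Finset.prod_eq_one fun i hi => ind_true (h i hi)
  · rw [ind_false h]
    push_neg at h
    obtain ⟨i, hi, hpi⟩ := h
    exact Finset.prod_eq_zero hi (ind_false hpi)

lemma ind_sub {x aa bb : ℝ} (h : aa ≤ bb) :
    ind (x ≤ bb) - ind (x ≤ aa) = ind (aa < x ∧ x ≤ bb) := by
  classical
  by_cases h1 : x ≤ aa
  · rw [ind_true h1, ind_true (h1.trans h), ind_false (fun hc => absurd h1 (not_le.2 hc.1))]
    ring
  · by_cases h2 : x ≤ bb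
    · rw [ind_true h2, ind_false h1, ind_true ⟨not_le.1 h1, h2⟩]; ring
    · rw [ind_false h2, ind_false h1, ind_false (fun hc => h2 hc.2)]; ring

lemma prod_neg' {ι : Type*} (s : Finset ι) (f : ι → ℝ) :
    ∏ i ∈ s, (-f i) = (-1:ℝ)^s.card * ∏ i ∈ s, f i := by
  rw [← Finset.prod_const (b := (-1:ℝ)), ← Finset.prod_mul_distrib]
  exact Finset.prod_congr rfl (fun i _ => by ring)

section Box

variable {d1 d2 : ℕ}

local notation "Ω'" => (Fin d1 → ℝ) × (Fin d2 → ℝ)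

/-- corner of the box `(a,b]` selected by `S` (coordinates in `S` take the `a`-value). -/
def corner (a b : Ω') (S : Finset (Fin d1) × Finset (Fin d2)) : Ω' :=
  (fun i => if i ∈ S.1 then a.1 i else b.1 i, fun j => if j ∈ S.2 then a.2 j else b.2 j)

/-- half-open box with strict lower constraints in every coordinate -/
def BoxI (a b : Ω') : Set Ω' :=
  {w | (∀ i, a.1 i < w.1 i ∧ w.1 i ≤ b.1 i) ∧ (∀ j, a.2 j < w.2 j ∧ w.2 j ≤ b.2 j)}

lemma measurableSet_BoxI (a b : Ω') : MeasurableSet (BoxI a b) := by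
  have h : BoxI a b = (⋂ i, {w : Ω' | a.1 i < w.1 i ∧ w.1 i ≤ b.1 i})
      ∩ ⋂ j, {w : Ω' | a.2 j < w.2 j ∧ w.2 j ≤ b.2 j} := by
    ext w; simp [BoxI]
  rw [h]
  refine MeasurableSet.inter (MeasurableSet.iInter fun i => ?_)
    (MeasurableSet.iInter fun j => ?_)
  · have e : {w : Ω' | a.1 i < w.1 i ∧ w.1 i ≤ b.1 i}
        = {w : Ω' | a.1 i < w.1 i} ∩ {w : Ω' | w.1 i ≤ b.1 i} := rfl
    rw [e]
    exact (measurableSet_lt measurable_const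
        (measurable_fst.eval (a := i))).inter
      (measurableSet_le (measurable_fst.eval (a := i)) measurable_const)
  · have e : {w : Ω' | a.2 j < w.2 j ∧ w.2 j ≤ b.2 j}
        = {w : Ω' | a.2 j < w.2 j} ∩ {w : Ω' | w.2 j ≤ b.2 j} := rfl
    rw [e]
    exact (measurableSet_lt measurable_const
        (measurable_snd.eval (a := j))).inter
      (measurableSet_le (measurable_snd.eval (a := j)) measurable_const)

lemma measurableSet_IicΩ (z : Ω') : MeasurableSet (Iic z) := by
  have h : Iic z = {w : Ω' | w.1 ≤ z.1} ∩ {w : Ω' | w.2 ≤ z.2} := by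
    ext w; simp [Prod.le_def, Set.mem_Iic]
  rw [h]
  exact (measurableSet_le_pi measurable_fst measurable_const).inter
    (measurableSet_le_pi measurable_snd measurable_const)

/-- Inclusion–exclusion: the measure of a half-open box as alternating sum of the CDF at
the corners. -/
lemma boxsum (κ : Measure Ω') [IsFiniteMeasure κ] (a b : Ω') (hab : a ≤ b) :
    (κ (BoxI a b)).toReal
      = ∑ S : Finset (Fin d1) × Finset (Fin d2),
          (-1:ℝ)^(S.1.card + S.2.card) * (κ (Iic (corner a b S))).toReal := by
  classical
  -- pointwise identity
  have hpt : ∀ w : Ω', ind (w ∈ BoxI a b)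
      = ∑ S : Finset (Fin d1) × Finset (Fin d2),
          (-1:ℝ)^(S.1.card + S.2.card) * ind (w ≤ corner a b S) := by
    intro w
    have h1 : ind (w ∈ BoxI a b)
        = (∏ i : Fin d1, (ind (w.1 i ≤ b.1 i) - ind (w.1 i ≤ a.1 i)))
          * ∏ j : Fin d2, (ind (w.2 j ≤ b.2 j) - ind (w.2 j ≤ a.2 j)) := by
      have e1 : ∀ i : Fin d1, ind (w.1 i ≤ b.1 i) - ind (w.1 i ≤ a.1 i)
          = ind (a.1 i < w.1 i ∧ w.1 i ≤ b.1 i) := fun i => ind_sub (hab.1 i)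
      have e2 : ∀ j : Fin d2, ind (w.2 j ≤ b.2 j) - ind (w.2 j ≤ a.2 j)
          = ind (a.2 j < w.2 j ∧ w.2 j ≤ b.2 j) := fun j => ind_sub (hab.2 j)
      rw [Finset.prod_congr rfl (fun i _ => e1 i), Finset.prod_congr rfl (fun j _ => e2 j),
        ind_prod, ind_prod]
      rw [← ind_and]
      refine ind_congr ?_
      constructor
      · rintro ⟨hA, hB⟩; exact ⟨fun i _ => hA i, fun j _ => hB j⟩
      · rintro ⟨hA, hB⟩; exact ⟨fun i => hA i (Finset.mem_univ i), fun j => hB j (Finset.mem_univ j)⟩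
    rw [h1]
    have expand1 : (∏ i : Fin d1, (ind (w.1 i ≤ b.1 i) - ind (w.1 i ≤ a.1 i)))
        = ∑ S : Finset (Fin d1), (-1:ℝ)^S.card * ∏ i : Fin d1,
            ind (w.1 i ≤ (if i ∈ S then a.1 i else b.1 i)) := by
      have e : ∀ i : Fin d1, ind (w.1 i ≤ b.1 i) - ind (w.1 i ≤ a.1 i)
          = (-ind (w.1 i ≤ a.1 i)) + ind (w.1 i ≤ b.1 i) := fun i => by ring
      rw [Finset.prod_congr rfl (fun i _ => e i), Finset.prod_add, Finset.powerset_univ]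
      refine Finset.sum_congr rfl (fun S _ => ?_)
      have hsplit : (∏ i : Fin d1, ind (w.1 i ≤ (if i ∈ S then a.1 i else b.1 i)))
          = (∏ i ∈ S, ind (w.1 i ≤ a.1 i)) * ∏ i ∈ Finset.univ \ S, ind (w.1 i ≤ b.1 i) := by
        rw [← Finset.prod_filter_mul_prod_filter_not Finset.univ (· ∈ S)
          (fun i => ind (w.1 i ≤ (if i ∈ S then a.1 i else b.1 i)))]
        congr 1
        · refine Finset.prod_congr (Finset.filter_univ_mem S) (fun i hi => by rw [if_pos hi])
        · refine Finset.prod_congr (Finset.sdiff_eq_filter Finset.univ S).symm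
            (fun i hi => by rw [if_neg (Finset.mem_sdiff.1 hi).2])
      rw [hsplit, prod_neg']
      ring
    have expand2 : (∏ j : Fin d2, (ind (w.2 j ≤ b.2 j) - ind (w.2 j ≤ a.2 j)))
        = ∑ T : Finset (Fin d2), (-1:ℝ)^T.card * ∏ j : Fin d2,
            ind (w.2 j ≤ (if j ∈ T then a.2 j else b.2 j)) := by
      have e : ∀ j : Fin d2, ind (w.2 j ≤ b.2 j) - ind (w.2 j ≤ a.2 j)
          = (-ind (w.2 j ≤ a.2 j)) + ind (w.2 j ≤ b.2 j) := fun j => by ring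
      rw [Finset.prod_congr rfl (fun j _ => e j), Finset.prod_add, Finset.powerset_univ]
      refine Finset.sum_congr rfl (fun T _ => ?_)
      have hsplit : (∏ j : Fin d2, ind (w.2 j ≤ (if j ∈ T then a.2 j else b.2 j)))
          = (∏ j ∈ T, ind (w.2 j ≤ a.2 j)) * ∏ j ∈ Finset.univ \ T, ind (w.2 j ≤ b.2 j) := by
        rw [← Finset.prod_filter_mul_prod_filter_not Finset.univ (· ∈ T)
          (fun j => ind (w.2 j ≤ (if j ∈ T then a.2 j else b.2 j)))]
        congr 1
        · refine Finset.prod_congr (Finset.filter_univ_mem T) (fun j hj => by rw [if_pos hj])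
        · refine Finset.prod_congr (Finset.sdiff_eq_filter Finset.univ T).symm
            (fun j hj => by rw [if_neg (Finset.mem_sdiff.1 hj).2])
      rw [hsplit, prod_neg']
      ring
    rw [expand1, expand2, Finset.sum_mul_sum, Fintype.sum_prod_type]
    refine Finset.sum_congr rfl (fun S _ => Finset.sum_congr rfl (fun T _ => ?_))
    have hcorner : ind (w ≤ corner a b (S, T))
        = (∏ i : Fin d1, ind (w.1 i ≤ (if i ∈ S then a.1 i else b.1 i)))
          * ∏ j : Fin d2, ind (w.2 j ≤ (if j ∈ T then a.2 j else b.2 j)) := by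
      rw [ind_prod, ind_prod, ← ind_and]
      refine ind_congr ?_
      constructor
      · rintro ⟨hA, hB⟩
        exact ⟨fun i _ => hA i, fun j _ => hB j⟩
      · rintro ⟨hA, hB⟩
        exact ⟨fun i => hA i (Finset.mem_univ i), fun j => hB j (Finset.mem_univ j)⟩
    rw [hcorner, pow_add]
    ring
  -- now integrate both sides
  have hBox := measurableSet_BoxI a b
  have lhs : (κ (BoxI a b)).toReal = ∫ w, ind (w ∈ BoxI a b) ∂κ := by
    rw [integral_ind κ (p := fun w => w ∈ BoxI a b) hBox, Set.setOf_mem_eq]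
  rw [lhs, funext hpt, integral_finset_sum]
  · refine Finset.sum_congr rfl (fun S _ => ?_)
    rw [integral_const_mul, integral_ind κ (p := fun w => w ≤ corner a b S) (measurableSet_IicΩ (corner a b S))]
    rfl
  · intro S _
    exact (integrable_ind κ (p := fun w => w ≤ corner a b S) (measurableSet_IicΩ (corner a b S))).const_mul _


/-- constant vector -/
def cvec (c : ℝ) : Ω' := (fun _ => c, fun _ => c)

lemma mem_cB_iff {r : ℝ} (hr : 0 ≤ r) (x w : Ω') :
    w ∈ closedBall x r ↔ (∀ i, |w.1 i - x.1 i| ≤ r) ∧ (∀ j, |w.2 j - x.2 j| ≤ r) := by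
  rw [mem_closedBall, Prod.dist_eq, sup_le_iff, dist_pi_le_iff hr, dist_pi_le_iff hr]
  simp only [Real.dist_eq]

lemma vol_cB (x : Ω') {r : ℝ} (hr : 0 ≤ r) :
    (volume : Measure Ω') (closedBall x r) = ENNReal.ofReal (2*r) ^ (d1 + d2) := by
  have h1 : closedBall x r = closedBall x.1 r ×ˢ closedBall x.2 r := by
    rw [closedBall_prod_same]
  rw [show (volume : Measure Ω') = (volume : Measure (Fin d1 → ℝ)).prod volume from rfl,
    h1, Measure.prod_prod, closedBall_pi _ hr, closedBall_pi _ hr, volume_pi_pi, volume_pi_pi]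
  simp only [Real.volume_closedBall]
  rw [Finset.prod_const, Finset.prod_const, Finset.card_univ, Fintype.card_fin,
    Finset.card_univ, Fintype.card_fin, ← pow_add]

lemma fst_add (u v : Ω') : (u + v).1 = u.1 + v.1 := rfl
lemma snd_add (u v : Ω') : (u + v).2 = u.2 + v.2 := rfl

lemma vol_Icc (a : Ω') {c : ℝ} :
    (volume : Measure Ω') (Icc a (a + cvec c)) = ENNReal.ofReal c ^ (d1 + d2) := by
  have h1 : Icc a (a + cvec c) = Icc a.1 (a + cvec c).1 ×ˢ Icc a.2 (a + cvec c).2 := by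
    rw [← Set.Icc_prod_Icc]
  rw [show (volume : Measure Ω') = (volume : Measure (Fin d1 → ℝ)).prod volume from rfl,
    h1, Measure.prod_prod, Real.volume_Icc_pi, Real.volume_Icc_pi]
  have e1 : ∀ i : Fin d1, (a + cvec c).1 i - a.1 i = c := fun i => by
    show a.1 i + c - a.1 i = c; ring
  have e2 : ∀ j : Fin d2, (a + cvec c).2 j - a.2 j = c := fun j => by
    show a.2 j + c - a.2 j = c; ring
  simp only [e1, e2]
  rw [Finset.prod_const, Finset.prod_const, Finset.card_univ, Fintype.card_fin,
    Finset.card_univ, Fintype.card_fin, ← pow_add]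

lemma Icc_eq_cB (a : Ω') {c : ℝ} (hc : 0 ≤ c) :
    Icc a (a + cvec (2*c)) = closedBall (a + cvec c) c := by
  ext w
  rw [mem_cB_iff hc, Set.mem_Icc, Prod.le_def, Prod.le_def, Pi.le_def, Pi.le_def,
    Pi.le_def, Pi.le_def]
  constructor
  · rintro ⟨⟨h1, h2⟩, h3, h4⟩
    constructor
    · intro i
      have := h1 i; have := h3 i
      have e : (a + cvec (2*c)).1 i = a.1 i + 2*c := rfl
      have e2 : (a + cvec c).1 i = a.1 i + c := rfl
      rw [e2]; rw [e] at this; rw [abs_le]; constructor <;> linarith [h1 i, h3 i]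
    · intro j
      have e : (a + cvec (2*c)).2 j = a.2 j + 2*c := rfl
      have e2 : (a + cvec c).2 j = a.2 j + c := rfl
      rw [e2]; rw [abs_le]
      have := h4 j; rw [e] at this
      constructor <;> linarith [h2 j]
  · rintro ⟨h1, h2⟩
    refine ⟨⟨fun i => ?_, fun j => ?_⟩, fun i => ?_, fun j => ?_⟩
    · have := (abs_le.1 (h1 i)).1
      have e2 : (a + cvec c).1 i = a.1 i + c := rfl
      rw [e2] at this; linarith
    · have := (abs_le.1 (h2 j)).1
      have e2 : (a + cvec c).2 j = a.2 j + c := rfl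
      rw [e2] at this; linarith
    · have := (abs_le.1 (h1 i)).2
      have e2 : (a + cvec c).1 i = a.1 i + c := rfl
      have e : (a + cvec (2*c)).1 i = a.1 i + 2*c := rfl
      rw [e2] at this; rw [e]; linarith
    · have := (abs_le.1 (h2 j)).2
      have e2 : (a + cvec c).2 j = a.2 j + c := rfl
      have e : (a + cvec (2*c)).2 j = a.2 j + 2*c := rfl
      rw [e2] at this; rw [e]; linarith

lemma hyper1_null (i : Fin d1) (c : ℝ) : (volume : Measure Ω') {w : Ω' | w.1 i = c} = 0 := by
  have hset : {w : Ω' | w.1 i = c} = {u : Fin d1 → ℝ | u i = c} ×ˢ (univ : Set (Fin d2 → ℝ)) := by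
    ext w; simp [Set.mem_prod]
  have h0 : (volume : Measure (Fin d1 → ℝ)) {u | u i = c} = 0 := by
    rw [volume_pi]; exact Measure.pi_hyperplane (fun _ : Fin d1 => (volume : Measure ℝ)) i c
  rw [show (volume : Measure Ω') = (volume : Measure (Fin d1 → ℝ)).prod volume from rfl,
    hset, Measure.prod_prod, h0, zero_mul]

lemma hyper2_null (j : Fin d2) (c : ℝ) : (volume : Measure Ω') {w : Ω' | w.2 j = c} = 0 := by
  have hset : {w : Ω' | w.2 j = c} = (univ : Set (Fin d1 → ℝ)) ×ˢ {u : Fin d2 → ℝ | u j = c} := by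
    ext w; simp [Set.mem_prod]
  have h0 : (volume : Measure (Fin d2 → ℝ)) {u | u j = c} = 0 := by
    rw [volume_pi]; exact Measure.pi_hyperplane (fun _ : Fin d2 => (volume : Measure ℝ)) j c
  rw [show (volume : Measure Ω') = (volume : Measure (Fin d1 → ℝ)).prod volume from rfl,
    hset, Measure.prod_prod, h0, mul_zero]

lemma box_subset_Icc (a b : Ω') : BoxI a b ⊆ Icc a b := by
  rintro w ⟨h1, h2⟩
  exact ⟨⟨fun i => (h1 i).1.le, fun j => (h2 j).1.le⟩, ⟨fun i => (h1 i).2, fun j => (h2 j).2⟩⟩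

lemma meas_Icc_eq_box (κ : Measure Ω') (hκ : κ ≪ (volume : Measure Ω')) (a b : Ω') :
    κ (Icc a b) = κ (BoxI a b) := by
  have hdiff : Icc a b \ BoxI a b ⊆
      (⋃ i, {w : Ω' | w.1 i = a.1 i}) ∪ ⋃ j, {w : Ω' | w.2 j = a.2 j} := by
    rintro w ⟨⟨⟨hw1, hw2⟩, hw3, hw4⟩, hw5⟩
    simp only [BoxI, Set.mem_setOf_eq, not_and_or, not_forall] at hw5
    rcases hw5 with ⟨i, hi⟩ | ⟨j, hj⟩
    · left
      refine Set.mem_iUnion.2 ⟨i, ?_⟩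
      rcases hi with h | h
      · exact le_antisymm (not_lt.1 h) (hw1 i)
      · exact absurd (hw3 i) h
    · right
      refine Set.mem_iUnion.2 ⟨j, ?_⟩
      rcases hj with h | h
      · exact le_antisymm (not_lt.1 h) (hw2 j)
      · exact absurd (hw4 j) h
  have hnull : κ (Icc a b \ BoxI a b) = 0 := by
    refine measure_mono_null hdiff ?_
    refine measure_union_null ?_ ?_ <;> refine measure_iUnion_null (fun k => hκ ?_)
    · exact hyper1_null k (a.1 k)
    · exact hyper2_null k (a.2 k)
  refine le_antisymm ?_ (measure_mono (box_subset_Icc a b))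
  calc κ (Icc a b) = κ (BoxI a b ∪ (Icc a b \ BoxI a b)) := by
        rw [Set.union_diff_cancel (box_subset_Icc a b)]
    _ ≤ κ (BoxI a b) + κ (Icc a b \ BoxI a b) := measure_union_le _ _
    _ = κ (BoxI a b) := by rw [hnull, add_zero]

lemma corner_eq_shift (a : Ω') (c : ℝ) (S : Finset (Fin d1) × Finset (Fin d2)) :
    corner a (a + cvec c) S
      = ((fun i => if i ∈ S.1 then 0 else c), (fun j => if j ∈ S.2 then 0 else c)) + a := by
  classical
  refine Prod.ext ?_ ?_ <;> funext k
  · simp only [corner, Prod.fst_add, Pi.add_apply]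
    by_cases h : k ∈ S.1 <;> simp [h, cvec, add_comm]
  · simp only [corner, Prod.snd_add, Pi.add_apply]
    by_cases h : k ∈ S.2 <;> simp [h, cvec, add_comm]

/-- Corner selection: if `U` occupies a small proportion of a ball around `x`, there is a
box around `x` of comparable size all of whose corners avoid `U`. -/
lemma exists_box (U : Set Ω') (x : Ω') {δ : ℝ} (hδ : 0 < δ)
    (hsm : volume (U ∩ closedBall x δ)
      < ENNReal.ofReal (δ/2) ^ (d1+d2) / 2^(d1+d2)) :
    ∃ a : Ω', a ≤ x ∧ x ≤ a + cvec (3*δ/2) ∧ Icc a (a + cvec (3*δ/2)) ⊆ closedBall x δ ∧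
      ∀ S : Finset (Fin d1) × Finset (Fin d2), corner a (a + cvec (3*δ/2)) S ∉ U := by
  classical
  haveI : (volume : Measure Ω').IsAddLeftInvariant :=
    inferInstanceAs (((volume : Measure (Fin d1 → ℝ)).prod volume).IsAddLeftInvariant)
  set B0 : Set Ω' := closedBall (x - cvec (3*δ/4)) (δ/4) with hB0
  set sh : Finset (Fin d1) × Finset (Fin d2) → Ω' := fun S =>
    ((fun i => if i ∈ S.1 then 0 else 3*δ/2), fun j => if j ∈ S.2 then 0 else 3*δ/2) with hsh
  have hmemB0 : ∀ ω ∈ B0, (∀ i, x.1 i - δ ≤ ω.1 i ∧ ω.1 i ≤ x.1 i - δ/2)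
      ∧ (∀ j, x.2 j - δ ≤ ω.2 j ∧ ω.2 j ≤ x.2 j - δ/2) := by
    intro ω hω
    rw [hB0, mem_cB_iff (by positivity)] at hω
    obtain ⟨h1, h2⟩ := hω
    constructor
    · intro i
      have e : (x - cvec (3*δ/4)).1 i = x.1 i - 3*δ/4 := rfl
      have := abs_le.1 (h1 i); rw [e] at this
      constructor <;> linarith [this.1, this.2]
    · intro j
      have e : (x - cvec (3*δ/4)).2 j = x.2 j - 3*δ/4 := rfl
      have := abs_le.1 (h2 j); rw [e] at this
      constructor <;> linarith [this.1, this.2]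
  have hsubB : ∀ S : Finset (Fin d1) × Finset (Fin d2), ∀ ω ∈ B0,
      sh S + ω ∈ closedBall x δ := by
    intro S ω hω
    obtain ⟨h1, h2⟩ := hmemB0 ω hω
    rw [mem_cB_iff hδ.le]
    constructor
    · intro i
      have e : (sh S + ω).1 i = (if i ∈ S.1 then (0:ℝ) else 3*δ/2) + ω.1 i := rfl
      rw [e, abs_le]
      have h3 := (h1 i).1; have h4 := (h1 i).2
      by_cases h : i ∈ S.1 <;> simp only [h, if_true, if_false] <;>
        constructor <;> linarith
    · intro j
      have e : (sh S + ω).2 j = (if j ∈ S.2 then (0:ℝ) else 3*δ/2) + ω.2 j := rfl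
      rw [e, abs_le]
      have h3 := (h2 j).1; have h4 := (h2 j).2
      by_cases h : j ∈ S.2 <;> simp only [h, if_true, if_false] <;>
        constructor <;> linarith
  have hBadle : ∀ S : Finset (Fin d1) × Finset (Fin d2),
      volume (B0 ∩ ((fun ω => sh S + ω) ⁻¹' U)) ≤ volume (U ∩ closedBall x δ) := by
    intro S
    have hsub : B0 ∩ ((fun ω => sh S + ω) ⁻¹' U)
        ⊆ (fun ω => sh S + ω) ⁻¹' (U ∩ closedBall x δ) := by
      rintro ω ⟨hw1, hw2⟩
      exact ⟨hw2, hsubB S ω hw1⟩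
    calc volume (B0 ∩ ((fun ω => sh S + ω) ⁻¹' U))
        ≤ volume ((fun ω => sh S + ω) ⁻¹' (U ∩ closedBall x δ)) := measure_mono hsub
      _ = volume (U ∩ closedBall x δ) := measure_preimage_add _ _ _
  have hvolB0 : volume B0 = ENNReal.ofReal (δ/2) ^ (d1+d2) := by
    have e : 2*(δ/4) = δ/2 := by ring
    rw [hB0, vol_cB _ (by positivity), e]
  have hcard : (Finset.univ : Finset (Finset (Fin d1) × Finset (Fin d2))).card
      = 2^(d1+d2) := by
    rw [Finset.card_univ, Fintype.card_prod, Fintype.card_finset, Fintype.card_finset,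
      Fintype.card_fin, Fintype.card_fin, ← pow_add]
  have hunion : volume (⋃ S ∈ (Finset.univ : Finset (Finset (Fin d1) × Finset (Fin d2))),
      (B0 ∩ ((fun ω => sh S + ω) ⁻¹' U))) < volume B0 := by
    have h1 : volume (⋃ S ∈ (Finset.univ : Finset (Finset (Fin d1) × Finset (Fin d2))),
        (B0 ∩ ((fun ω => sh S + ω) ⁻¹' U)))
        ≤ ∑ S : Finset (Fin d1) × Finset (Fin d2), volume (U ∩ closedBall x δ) := by
      refine le_trans (measure_biUnion_finset_le _ _) ?_
      exact Finset.sum_le_sum (fun S _ => hBadle S)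
    have h2 : ∑ S : Finset (Fin d1) × Finset (Fin d2), volume (U ∩ closedBall x δ)
        = 2^(d1+d2) * volume (U ∩ closedBall x δ) := by
      rw [Finset.sum_const, hcard, nsmul_eq_mul]
      norm_num
    have h3 : (2:ℝ≥0∞)^(d1+d2) * volume (U ∩ closedBall x δ)
        < 2^(d1+d2) * (ENNReal.ofReal (δ/2) ^ (d1+d2) / 2^(d1+d2)) := by
      refine (ENNReal.mul_lt_mul_iff_right (by positivity) (by simp)).2 hsm
    have h4 : (2:ℝ≥0∞)^(d1+d2) * (ENNReal.ofReal (δ/2) ^ (d1+d2) / 2^(d1+d2))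
        = ENNReal.ofReal (δ/2) ^ (d1+d2) := by
      rw [ENNReal.mul_div_cancel (by positivity) (by simp)]
    calc volume (⋃ S ∈ (Finset.univ : Finset (Finset (Fin d1) × Finset (Fin d2))),
          (B0 ∩ ((fun ω => sh S + ω) ⁻¹' U)))
        ≤ ∑ S : Finset (Fin d1) × Finset (Fin d2), volume (U ∩ closedBall x δ) := h1
      _ = 2^(d1+d2) * volume (U ∩ closedBall x δ) := h2
      _ < 2^(d1+d2) * (ENNReal.ofReal (δ/2) ^ (d1+d2) / 2^(d1+d2)) := h3
      _ = ENNReal.ofReal (δ/2) ^ (d1+d2) := h4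
      _ = volume B0 := hvolB0.symm
  have hnotsub : ¬ (B0 ⊆ ⋃ S ∈ (Finset.univ : Finset (Finset (Fin d1) × Finset (Fin d2))),
      (B0 ∩ ((fun ω => sh S + ω) ⁻¹' U))) := by
    intro hsub
    exact absurd (measure_mono hsub) (not_le.2 hunion)
  obtain ⟨ω, hωB0, hωnot⟩ := Set.not_subset.1 hnotsub
  have hωg : ∀ S : Finset (Fin d1) × Finset (Fin d2), sh S + ω ∉ U := by
    intro S hSU
    refine hωnot ?_
    refine Set.mem_biUnion (Finset.mem_univ S) ⟨hωB0, hSU⟩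
  obtain ⟨hc1, hc2⟩ := hmemB0 ω hωB0
  refine ⟨ω, ⟨fun i => ?_, fun j => ?_⟩, ⟨fun i => ?_, fun j => ?_⟩, ?_, ?_⟩
  · have := (hc1 i).2; linarith
  · have := (hc2 j).2; linarith
  · have e : (ω + cvec (3*δ/2)).1 i = ω.1 i + 3*δ/2 := rfl
    rw [e]; have := (hc1 i).1; linarith
  · have e : (ω + cvec (3*δ/2)).2 j = ω.2 j + 3*δ/2 := rfl
    rw [e]; have := (hc2 j).1; linarith
  · intro w hw
    obtain ⟨⟨hw1, hw2⟩, hw3, hw4⟩ := hw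
    rw [mem_cB_iff hδ.le]
    constructor
    · intro i
      have e : (ω + cvec (3*δ/2)).1 i = ω.1 i + 3*δ/2 := rfl
      have l1 := hw1 i
      have l2 := hw3 i; rw [e] at l2
      have := (hc1 i).1; have := (hc1 i).2
      rw [abs_le]; constructor <;> linarith
    · intro j
      have e : (ω + cvec (3*δ/2)).2 j = ω.2 j + 3*δ/2 := rfl
      have l1 := hw2 j
      have l2 := hw4 j; rw [e] at l2
      have := (hc2 j).1; have := (hc2 j).2
      rw [abs_le]; constructor <;> linarith
  · intro S
    rw [corner_eq_shift]
    exact hωg S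

end Box


section Forward

variable {d1 d2 : ℕ}

local notation "Ω'" => (Fin d1 → ℝ) × (Fin d2 → ℝ)

lemma msIic1 {d : ℕ} (t : Fin d → ℝ) : MeasurableSet (Iic t) :=
  measurableSet_le_pi measurable_id measurable_const

set_option maxHeartbeats 2000000 in
lemma partCforward (μ : Measure Ω') [IsProbabilityMeasure μ]
    (h_ac : μ ≪ (volume : Measure Ω'))
    (h0 : ∫ z, ((μ {w | w.1 ≤ z.1 ∧ w.2 ≤ z.2}).toReal
          - (μ {w | w.1 ≤ z.1}).toReal * (μ {w | w.2 ≤ z.2}).toReal) ^ 2 ∂μ = 0) :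
    μ = μ.fst.prod μ.snd := by
  classical
  set ν := μ.fst.prod μ.snd with hν
  haveI : IsProbabilityMeasure ν := by rw [hν]; infer_instance
  set D : Ω' → ℝ := fun z => (μ (Iic z)).toReal - (ν (Iic z)).toReal with hD
  have hIic_eq : ∀ z : Ω', (Iic z : Set Ω') = {w : Ω' | w.1 ≤ z.1 ∧ w.2 ≤ z.2} := by
    intro z; ext w; simp [Prod.le_def]
  have hν_Iic : ∀ z : Ω', ν (Iic z) = μ {w | w.1 ≤ z.1} * μ {w | w.2 ≤ z.2} := by
    intro z
    have h1 : (Iic z : Set Ω') = Iic z.1 ×ˢ Iic z.2 := by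
      ext w; simp [Prod.le_def, Set.mem_prod]
    rw [hν, h1, Measure.prod_prod, Measure.fst_apply (msIic1 z.1),
      Measure.snd_apply (msIic1 z.2)]
    rfl
  have hDz : ∀ z : Ω', (μ {w | w.1 ≤ z.1 ∧ w.2 ≤ z.2}).toReal
      - (μ {w | w.1 ≤ z.1}).toReal * (μ {w | w.2 ≤ z.2}).toReal = D z := by
    intro z
    simp only [hD]
    rw [hν_Iic z, ENNReal.toReal_mul, hIic_eq z]
  set Z : Set Ω' := {z | D z = 0} with hZ
  -- measurability
  have hsle : MeasurableSet {p : Ω' × Ω' | p.2 ≤ p.1} := by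
    have h : {p : Ω' × Ω' | p.2 ≤ p.1}
        = {p : Ω' × Ω' | p.2.1 ≤ p.1.1} ∩ {p : Ω' × Ω' | p.2.2 ≤ p.1.2} := by
      ext p; simp [Prod.le_def]
    rw [h]
    exact (measurableSet_le_pi (measurable_fst.comp measurable_snd)
        (measurable_fst.comp measurable_fst)).inter
      (measurableSet_le_pi (measurable_snd.comp measurable_snd)
        (measurable_snd.comp measurable_fst))
  have hm1 : Measurable fun z : Ω' => μ (Iic z) := by
    have h := measurable_measure_prodMk_left (ν := μ) hsle
    exact h
  have hm2 : Measurable fun z : Ω' => ν (Iic z) := by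
    have h := measurable_measure_prodMk_left (ν := ν) hsle
    exact h
  have hDmeas : Measurable D := hm1.ennreal_toReal.sub hm2.ennreal_toReal
  have hZmeas : MeasurableSet Z := hDmeas (measurableSet_singleton 0)
  -- μ-null complement
  have htoReal01 : ∀ (κ : Measure Ω') [IsProbabilityMeasure κ], ∀ s : Set Ω',
      (κ s).toReal ≤ 1 := by
    intro κ hκ s
    have h1 : κ s ≤ 1 := prob_le_one
    have := ENNReal.toReal_mono (by norm_num) h1
    simpa using this
  have hUnull : μ Zᶜ = 0 := by
    have hbd : ∀ z : Ω', |D z| ≤ 1 := by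
      intro z
      simp only [hD]
      rw [abs_le]
      have h1 := htoReal01 μ (Iic z)
      have h2 := htoReal01 ν (Iic z)
      have h3 : 0 ≤ (μ (Iic z)).toReal := ENNReal.toReal_nonneg
      have h4 : 0 ≤ (ν (Iic z)).toReal := ENNReal.toReal_nonneg
      constructor <;> linarith
    have hint : Integrable (fun z => (D z)^2) μ := by
      refine ⟨(hDmeas.pow_const 2).aestronglyMeasurable,
        HasFiniteIntegral.of_bounded (C := 1) ?_⟩
      refine Filter.Eventually.of_forall (fun z => ?_)
      have h1 := hbd z
      have h2 := abs_nonneg (D z)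
      rw [Real.norm_eq_abs, abs_of_nonneg (sq_nonneg _), ← sq_abs]
      exact pow_le_one₀ h2 h1
    have h00 : ∫ z, (D z)^2 ∂μ = 0 := by
      rw [← h0]
      refine integral_congr_ae (Filter.Eventually.of_forall (fun z => ?_))
      simp only []
      rw [hDz z]
    have hDae := (integral_eq_zero_iff_of_nonneg (fun z => sq_nonneg (D z)) hint).1 h00
    have hae : ∀ᵐ z ∂μ, z ∈ Z := by
      filter_upwards [hDae] with z hz
      have h1 : D z ^ 2 = 0 := hz
      have h2 : D z = 0 := by
        have := sq_nonneg (D z)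
        nlinarith [sq_abs (D z), abs_nonneg (D z)]
      exact h2
    exact ae_iff.1 hae
  -- absolute continuity of ν
  have hfst_ac : μ.fst ≪ (volume : Measure (Fin d1 → ℝ)) := by
    refine Measure.AbsolutelyContinuous.mk (fun s hs hvol => ?_)
    rw [Measure.fst_apply hs]
    refine h_ac ?_
    have h1 : Prod.fst ⁻¹' s = s ×ˢ (univ : Set (Fin d2 → ℝ)) := (Set.prod_univ).symm
    rw [h1, show (volume : Measure Ω') = (volume : Measure (Fin d1 → ℝ)).prod volume from rfl,
      Measure.prod_prod, hvol, zero_mul]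
  have hsnd_ac : μ.snd ≪ (volume : Measure (Fin d2 → ℝ)) := by
    refine Measure.AbsolutelyContinuous.mk (fun s hs hvol => ?_)
    rw [Measure.snd_apply hs]
    refine h_ac ?_
    have h1 : Prod.snd ⁻¹' s = (univ : Set (Fin d1 → ℝ)) ×ˢ s := (Set.univ_prod).symm
    rw [h1, show (volume : Measure Ω') = (volume : Measure (Fin d1 → ℝ)).prod volume from rfl,
      Measure.prod_prod, hvol, mul_zero]
  have hν_ac : ν ≪ (volume : Measure Ω') := by
    rw [hν, show (volume : Measure Ω') = (volume : Measure (Fin d1 → ℝ)).prod volume from rfl]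
    exact hfst_ac.prod hsnd_ac
  -- corners in Z give equal box measures
  have hZIic : ∀ c ∈ Z, μ (Iic c) = ν (Iic c) := by
    intro c hc
    have h1 : D c = 0 := hc
    simp only [hD] at h1
    have h2 : (μ (Iic c)).toReal = (ν (Iic c)).toReal := by
      have := sub_eq_zero.1 h1
      exact this
    exact (ENNReal.toReal_eq_toReal_iff' (measure_ne_top μ _) (measure_ne_top ν _)).1 h2
  have hbox : ∀ (a : Ω') (c : ℝ), 0 ≤ c →
      (∀ S : Finset (Fin d1) × Finset (Fin d2), corner a (a + cvec c) S ∈ Z) →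
      μ (Icc a (a + cvec c)) = ν (Icc a (a + cvec c)) := by
    intro a c hc hcorners
    have hab : a ≤ a + cvec c := by
      constructor
      · intro i; show a.1 i ≤ a.1 i + c; linarith
      · intro j; show a.2 j ≤ a.2 j + c; linarith
    have h1 : (μ (BoxI a (a + cvec c))).toReal = (ν (BoxI a (a + cvec c))).toReal := by
      rw [boxsum μ _ _ hab, boxsum ν _ _ hab]
      refine Finset.sum_congr rfl (fun S _ => ?_)
      rw [hZIic _ (hcorners S)]
    rw [meas_Icc_eq_box μ h_ac, meas_Icc_eq_box ν hν_ac]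
    exact (ENNReal.toReal_eq_toReal_iff' (measure_ne_top _ _) (measure_ne_top _ _)).1 h1
  -- Vitali family
  have hofReal3 : (ENNReal.ofReal 3) = 3 := by
    rw [ENNReal.ofReal_ofNat]
  have hdb : ∀ x : Ω', ∃ᶠ r in 𝓝[>] (0:ℝ), (volume : Measure Ω') (closedBall x (3 * r))
      ≤ ((6:ℝ≥0)^(d1+d2) : ℝ≥0∞) * volume (closedBall x r) := by
    intro x
    refine Filter.Eventually.frequently ?_
    filter_upwards [self_mem_nhdsWithin] with r hr
    have hr' : (0:ℝ) < r := hr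
    rw [vol_cB _ (by positivity), vol_cB _ hr'.le]
    have e1 : 2*(3*r) = 3*(2*r) := by ring
    rw [e1, ENNReal.ofReal_mul (by norm_num), mul_pow, hofReal3]
    have hc6 : ((6:ℝ≥0) : ℝ≥0∞) = (6:ℝ≥0∞) := by norm_cast
    rw [hc6]
    refine mul_le_mul_left (pow_le_pow_left' (by norm_num) _) _
  set v : VitaliFamily (volume : Measure Ω') :=
    Vitali.vitaliFamily volume ((6:ℝ≥0)^(d1+d2)) hdb with hv
  have hmem_sets : ∀ (x : Ω') (t : Set Ω'), IsClosed t → (interior t).Nonempty →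
      (∃ r, t ⊆ closedBall x r ∧ (volume : Measure Ω') (closedBall x (3*r))
        ≤ ((6:ℝ≥0)^(d1+d2) : ℝ≥0∞) * volume t) → t ∈ v.setsAt x := by
    intro x t h1 h2 h3
    rw [hv]
    exact ⟨h1, h2, h3⟩
  have hcB_mem : ∀ (x : Ω') {δ : ℝ}, 0 < δ → closedBall x δ ∈ v.setsAt x := by
    intro x δ hδ
    refine hmem_sets x _ isClosed_closedBall
      ((nonempty_ball.2 hδ).mono ball_subset_interior_closedBall) ⟨δ, Subset.rfl, ?_⟩
    rw [vol_cB _ (by positivity), vol_cB _ hδ.le]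
    have e1 : 2*(3*δ) = 3*(2*δ) := by ring
    rw [e1, ENNReal.ofReal_mul (by norm_num), mul_pow, hofReal3]
    have hc6 : ((6:ℝ≥0) : ℝ≥0∞) = (6:ℝ≥0∞) := by norm_cast
    rw [hc6]
    refine mul_le_mul_left (pow_le_pow_left' (by norm_num) _) _
  -- key a.e. statement
  have hkey : ∀ᵐ x ∂(volume : Measure Ω'), x ∈ Z →
      μ.rnDeriv volume x = ν.rnDeriv volume x := by
    filter_upwards [v.ae_tendsto_rnDeriv μ, v.ae_tendsto_rnDeriv ν,
      v.ae_tendsto_measure_inter_div_of_measurableSet (s := Zᶜ) hZmeas.compl]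
      with x h1 h2 h3 hxZ
    have h3' : Tendsto (fun a => volume (Zᶜ ∩ a) / volume a) (v.filterAt x) (𝓝 0) := by
      have hi : (Zᶜ : Set Ω').indicator (1 : Ω' → ℝ≥0∞) x = 0 := by
        rw [Set.indicator_of_notMem (by simpa using hxZ)]
      rwa [hi] at h3
    refine tendsto_nhds_unique_of_frequently_eq h1 h2 ?_
    have hfreq : ∃ᶠ t in v.filterAt x, μ t = ν t := by
      rw [v.frequently_filterAt_iff]
      intro ε hε
      set θ : ℝ≥0∞ := 2⁻¹ * ((2:ℝ≥0∞)^(d1+d2))⁻¹ * ((4:ℝ≥0∞)^(d1+d2))⁻¹ with hθ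
      have hθpos : 0 < θ := by
        rw [hθ]
        exact ENNReal.mul_pos (ENNReal.mul_pos (by simp)
          (ENNReal.inv_ne_zero.2 (by simp))).ne' (ENNReal.inv_ne_zero.2 (by simp))
      have hlt := h3'.eventually_lt_const hθpos
      rw [v.eventually_filterAt_iff] at hlt
      obtain ⟨ε₀, hε₀, hh⟩ := hlt
      set δ : ℝ := min ε ε₀ / 2 with hδdef
      have hδpos : 0 < δ := div_pos (lt_min hε hε₀) two_pos
      have hδε : δ ≤ ε := by
        have h1 : min ε ε₀ ≤ ε := min_le_left _ _
        have h2 : 0 < min ε ε₀ := lt_min hε hε₀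
        rw [hδdef]; linarith
      have hδε₀ : δ ≤ ε₀ := by
        have h1 : min ε ε₀ ≤ ε₀ := min_le_right _ _
        have h2 : 0 < min ε ε₀ := lt_min hε hε₀
        rw [hδdef]; linarith
      have hratio := hh (closedBall x δ) (hcB_mem x hδpos)
        (closedBall_subset_closedBall hδε₀)
      have hcB0 : volume (closedBall x δ) ≠ 0 := by
        rw [vol_cB _ hδpos.le]
        refine pow_ne_zero _ ?_
        rw [Ne, ENNReal.ofReal_eq_zero, not_le]
        linarith
      have hcBtop : volume (closedBall x δ) ≠ ⊤ := by
        rw [vol_cB _ hδpos.le]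
        exact ENNReal.pow_ne_top ENNReal.ofReal_ne_top
      have hsm : volume (Zᶜ ∩ closedBall x δ) < θ * volume (closedBall x δ) :=
        (ENNReal.div_lt_iff (Or.inl hcB0) (Or.inl hcBtop)).1 hratio
      have hbound : θ * volume (closedBall x δ)
          ≤ ENNReal.ofReal (δ/2)^(d1+d2) / 2^(d1+d2) := by
        rw [vol_cB _ hδpos.le, hθ]
        have e1 : 2*δ = 4*(δ/2) := by ring
        rw [e1, ENNReal.ofReal_mul (by norm_num), mul_pow, ENNReal.ofReal_ofNat]
        rw [ENNReal.div_eq_inv_mul]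
        calc 2⁻¹ * ((2:ℝ≥0∞)^(d1+d2))⁻¹ * ((4:ℝ≥0∞)^(d1+d2))⁻¹
              * ((4:ℝ≥0∞)^(d1+d2) * ENNReal.ofReal (δ/2)^(d1+d2))
            = (((4:ℝ≥0∞)^(d1+d2))⁻¹ * (4:ℝ≥0∞)^(d1+d2))
              * (2⁻¹ * (((2:ℝ≥0∞)^(d1+d2))⁻¹ * ENNReal.ofReal (δ/2)^(d1+d2))) := by
              ring
          _ = 2⁻¹ * (((2:ℝ≥0∞)^(d1+d2))⁻¹ * ENNReal.ofReal (δ/2)^(d1+d2)) := by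
              rw [ENNReal.inv_mul_cancel (by positivity) (by simp), one_mul]
          _ ≤ 1 * (((2:ℝ≥0∞)^(d1+d2))⁻¹ * ENNReal.ofReal (δ/2)^(d1+d2)) := by
              exact mul_le_mul_left (ENNReal.inv_le_one.2 (by norm_num)) _
          _ = ((2:ℝ≥0∞)^(d1+d2))⁻¹ * ENNReal.ofReal (δ/2)^(d1+d2) := one_mul _
      have hsm' : volume (Zᶜ ∩ closedBall x δ)
          < ENNReal.ofReal (δ/2)^(d1+d2) / 2^(d1+d2) := lt_of_lt_of_le hsm hbound
      obtain ⟨a, hax, hxb, hsub, hcorners⟩ := exists_box Zᶜ x hδpos hsm'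
      have hcornersZ : ∀ S : Finset (Fin d1) × Finset (Fin d2),
          corner a (a + cvec (3*δ/2)) S ∈ Z := by
        intro S
        have := hcorners S
        simpa using this
      have heq : μ (Icc a (a + cvec (3*δ/2))) = ν (Icc a (a + cvec (3*δ/2))) :=
        hbox a (3*δ/2) (by positivity) hcornersZ
      refine ⟨Icc a (a + cvec (3*δ/2)), ?_,
        hsub.trans (closedBall_subset_closedBall hδε), heq⟩
      have h32 : (3*δ/2) = 2*(3*δ/4) := by ring
      refine hmem_sets x _ ?_ ?_ ⟨δ, hsub, ?_⟩
      · rw [h32, Icc_eq_cB a (by positivity)]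
        exact isClosed_closedBall
      · rw [h32, Icc_eq_cB a (by positivity)]
        exact (nonempty_ball.2 (by positivity)).mono ball_subset_interior_closedBall
      · rw [vol_Icc, vol_cB _ (by positivity)]
        have e1 : 2*(3*δ) = 4*(3*δ/2) := by ring
        rw [e1, ENNReal.ofReal_mul (by norm_num), mul_pow, ENNReal.ofReal_ofNat]
        have hc6 : ((6:ℝ≥0) : ℝ≥0∞) = (6:ℝ≥0∞) := by norm_cast
        rw [hc6]
        exact mul_le_mul_left (pow_le_pow_left' (by norm_num) _) _
    exact hfreq.mono (fun t ht => by rw [ht])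
  haveI : μ.HaveLebesgueDecomposition volume :=
    Measure.haveLebesgueDecomposition_of_sigmaFinite μ volume
  haveI : ν.HaveLebesgueDecomposition volume :=
    Measure.haveLebesgueDecomposition_of_sigmaFinite ν volume
  -- assemble
  have hrepμ : volume.withDensity (μ.rnDeriv volume) = μ :=
    Measure.withDensity_rnDeriv_eq μ volume h_ac
  have hrepν : volume.withDensity (ν.rnDeriv volume) = ν :=
    Measure.withDensity_rnDeriv_eq ν volume hν_ac
  have hμZ : μ Z = ν Z := by
    rw [← Measure.setLIntegral_rnDeriv h_ac Z, ← Measure.setLIntegral_rnDeriv hν_ac Z]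
    refine lintegral_congr_ae ?_
    rw [EventuallyEq, ae_restrict_iff' hZmeas]
    exact hkey
  have hμZ1 : μ Z = 1 := by
    have h := measure_add_measure_compl (μ := μ) hZmeas
    rw [hUnull, add_zero, measure_univ] at h
    exact h
  have hνU : ν Zᶜ = 0 := by
    have h := measure_add_measure_compl (μ := ν) hZmeas
    rw [← hμZ, hμZ1, measure_univ] at h
    have h2 : (1:ℝ≥0∞) + ν Zᶜ = 1 + 0 := by rw [add_zero]; exact h
    exact (ENNReal.add_right_inj (by norm_num)).1 h2
  have hf0 : ∀ᵐ x ∂(volume : Measure Ω'), x ∈ Zᶜ → μ.rnDeriv volume x = 0 := by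
    have h1 : ∫⁻ x in Zᶜ, μ.rnDeriv volume x ∂volume = 0 := by
      rw [Measure.setLIntegral_rnDeriv h_ac]
      exact hUnull
    have h2 := (lintegral_eq_zero_iff (μ.measurable_rnDeriv volume)).1 h1
    rw [EventuallyEq, ae_restrict_iff' hZmeas.compl] at h2
    exact h2
  have hg0 : ∀ᵐ x ∂(volume : Measure Ω'), x ∈ Zᶜ → ν.rnDeriv volume x = 0 := by
    have h1 : ∫⁻ x in Zᶜ, ν.rnDeriv volume x ∂volume = 0 := by
      rw [Measure.setLIntegral_rnDeriv hν_ac]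
      exact hνU
    have h2 := (lintegral_eq_zero_iff (ν.measurable_rnDeriv volume)).1 h1
    rw [EventuallyEq, ae_restrict_iff' hZmeas.compl] at h2
    exact h2
  have hfg : μ.rnDeriv volume =ᵐ[(volume : Measure Ω')] ν.rnDeriv volume := by
    filter_upwards [hkey, hf0, hg0] with x k1 k2 k3
    by_cases hx : x ∈ Z
    · exact k1 hx
    · rw [k2 hx, k3 hx]
  calc μ = volume.withDensity (μ.rnDeriv volume) := hrepμ.symm
    _ = volume.withDensity (ν.rnDeriv volume) := withDensity_congr_ae hfg
    _ = ν := hrepν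


lemma partCback (μ : Measure Ω') [IsProbabilityMeasure μ] (h : μ = μ.fst.prod μ.snd) :
    ∫ z, ((μ {w | w.1 ≤ z.1 ∧ w.2 ≤ z.2}).toReal
          - (μ {w | w.1 ≤ z.1}).toReal * (μ {w | w.2 ≤ z.2}).toReal) ^ 2 ∂μ = 0 := by
  have key : ∀ z : Ω', (μ {w | w.1 ≤ z.1 ∧ w.2 ≤ z.2}).toReal
      - (μ {w | w.1 ≤ z.1}).toReal * (μ {w | w.2 ≤ z.2}).toReal = 0 := by
    intro z
    have hset : {w : Ω' | w.1 ≤ z.1 ∧ w.2 ≤ z.2} = Iic z.1 ×ˢ Iic z.2 := by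
      ext w; simp [Set.mem_prod, Prod.le_def]
    have h1 : μ {w | w.1 ≤ z.1 ∧ w.2 ≤ z.2} = μ.fst (Iic z.1) * μ.snd (Iic z.2) := by
      conv_lhs => rw [h]
      rw [hset, Measure.prod_prod]
    have h2 : μ {w | w.1 ≤ z.1} = μ.fst (Iic z.1) := by
      rw [Measure.fst_apply (msIic1 z.1)]; rfl
    have h3 : μ {w | w.2 ≤ z.2} = μ.snd (Iic z.2) := by
      rw [Measure.snd_apply (msIic1 z.2)]; rfl
    rw [h1, h2, h3, ENNReal.toReal_mul]
    ring
  calc ∫ z, ((μ {w | w.1 ≤ z.1 ∧ w.2 ≤ z.2}).toReal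
          - (μ {w | w.1 ≤ z.1}).toReal * (μ {w | w.2 ≤ z.2}).toReal) ^ 2 ∂μ
      = ∫ _z, (0:ℝ) ∂μ := by
        refine integral_congr_ae (Filter.Eventually.of_forall (fun z => ?_))
        simp only []
        rw [key z]
        norm_num
    _ = 0 := integral_zero _ _

end Forward

end HoeffD

/-- for a pair `(X1, X2)` of random vectors in `ℝ^{d1} × ℝ^{d2}` with
absolutely continuous joint law `μ`, the expectation (over five independent copies of the
pair) of the product over `k = 1, 2` of
`(1/2){1(X_{k1},X_{k2} ⪯ X_{k5}) − 1(X_{k1},X_{k3} ⪯ X_{k5}) − 1(X_{k4},X_{k2} ⪯ X_{k5})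
  + 1(X_{k4},X_{k3} ⪯ X_{k5})}`
equals `E[(F_{(X1,X2)}(X_{15},X_{25}) − F_{X1}(X_{15}) F_{X2}(X_{25}))²]`, which is
nonnegative and vanishes if and only if `X1` and `X2` are independent.  Here `⪯` is the
coordinatewise order, and the CDFs are evaluated through the law `μ`. -/
theorem hoeffding_marginal_D_eq_cdf_form {d1 d2 : ℕ}
    (μ : Measure ((Fin d1 → ℝ) × (Fin d2 → ℝ))) [IsProbabilityMeasure μ]
    (h_ac : μ ≪ (volume : Measure ((Fin d1 → ℝ) × (Fin d2 → ℝ)))) :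
    (∫ x, ((1 / 2 : ℝ)
          * (ind ((x 0).1 ≤ (x 4).1 ∧ (x 1).1 ≤ (x 4).1)
            - ind ((x 0).1 ≤ (x 4).1 ∧ (x 2).1 ≤ (x 4).1)
            - ind ((x 3).1 ≤ (x 4).1 ∧ (x 1).1 ≤ (x 4).1)
            + ind ((x 3).1 ≤ (x 4).1 ∧ (x 2).1 ≤ (x 4).1)))
        * ((1 / 2 : ℝ)
          * (ind ((x 0).2 ≤ (x 4).2 ∧ (x 1).2 ≤ (x 4).2)
            - ind ((x 0).2 ≤ (x 4).2 ∧ (x 2).2 ≤ (x 4).2)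
            - ind ((x 3).2 ≤ (x 4).2 ∧ (x 1).2 ≤ (x 4).2)
            + ind ((x 3).2 ≤ (x 4).2 ∧ (x 2).2 ≤ (x 4).2)))
        ∂(Measure.pi fun _ : Fin 5 => μ))
      = ∫ z, ((μ {w | w.1 ≤ z.1 ∧ w.2 ≤ z.2}).toReal
          - (μ {w | w.1 ≤ z.1}).toReal * (μ {w | w.2 ≤ z.2}).toReal) ^ 2 ∂μ
    ∧ 0 ≤ ∫ z, ((μ {w | w.1 ≤ z.1 ∧ w.2 ≤ z.2}).toReal
          - (μ {w | w.1 ≤ z.1}).toReal * (μ {w | w.2 ≤ z.2}).toReal) ^ 2 ∂μ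
    ∧ ((∫ z, ((μ {w | w.1 ≤ z.1 ∧ w.2 ≤ z.2}).toReal
          - (μ {w | w.1 ≤ z.1}).toReal * (μ {w | w.2 ≤ z.2}).toReal) ^ 2 ∂μ) = 0
        ↔ μ = μ.fst.prod μ.snd) := by
  refine ⟨HoeffD.partA μ, integral_nonneg (fun z => sq_nonneg _),
    ⟨fun h0 => HoeffD.partCforward μ h_ac h0, fun h => HoeffD.partCback μ h⟩⟩
end

section
/- Let P be a probability measure on ℝ^d that is absolutely continuous with respect to Lebesgue measure, and let Ψ : ℝ^d → ℝ be a convex function (hence differentiable Lebesgue-a.e., and therefore P-a.e.) such that the pushforward of P under ∇Ψ is the spherical uniform distribution U_d. Fix v ∈ ℝ^d, a > 0, and an orthogonal d × d matrix O, and define Ψ*(z) := a Ψ(a^{-1} Oᵀ (z − v)). Then: (i) Ψ* is convex; (ii) Ψ* is differentiable at v + aOz whenever Ψ is differentiable at z, with ∇Ψ*(v + aOz) = O ∇Ψ(z); and (iii) if Z ∼ P, the pushforward of the distribution of v + aOZ under ∇Ψ* is again U_d. In particular, z ↦ O ∇Ψ(a^{-1}Oᵀ(z − v)) is a center-outward distribution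 function of v + aOZ. -/
open MeasureTheory Matrix Metric
open scoped Pointwise

/-- The uniform (normalized surface) probability measure on the unit sphere of `ℝ^d`. -/
noncomputable def unitSphereUniform (d : ℕ) :
    Measure (Metric.sphere (0 : EuclideanSpace ℝ (Fin d)) 1) :=
  ((volume : Measure (EuclideanSpace ℝ (Fin d))).toSphere Set.univ)⁻¹ •
    (volume : Measure (EuclideanSpace ℝ (Fin d))).toSphere

/-- The spherical uniform distribution `U_d` on the open unit ball of `ℝ^d`: the pushforward
of the product of the uniform distribution on `[0,1)` and the uniform probability measure on
the unit sphere under `(r, s) ↦ r • s`. -/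
noncomputable def sphericalUniform (d : ℕ) : Measure (EuclideanSpace ℝ (Fin d)) :=
  ((volume.restrict (Set.Ico (0 : ℝ) 1)).prod (unitSphereUniform d)).map
    fun p => p.1 • (p.2 : EuclideanSpace ℝ (Fin d))

section aux

variable {d : ℕ}

/-- toSphere is invariant under a linear isometry equivalence. -/
lemma toSphere_map_isometry (e : EuclideanSpace ℝ (Fin d) ≃ₗᵢ[ℝ] EuclideanSpace ℝ (Fin d)) :
    ((volume : Measure (EuclideanSpace ℝ (Fin d))).toSphere).map
      (fun s : Metric.sphere (0 : EuclideanSpace ℝ (Fin d)) 1 =>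
        (⟨e s, by simp [mem_sphere_iff_norm] ⟩ : Metric.sphere (0 : EuclideanSpace ℝ (Fin d)) 1))
      = (volume : Measure (EuclideanSpace ℝ (Fin d))).toSphere := by
  set E := EuclideanSpace ℝ (Fin d)
  set f : Metric.sphere (0 : E) 1 → Metric.sphere (0 : E) 1 :=
    fun s => (⟨e s, by simp [mem_sphere_iff_norm]⟩ : Metric.sphere (0 : E) 1) with hf
  have hfc : Continuous f := Continuous.subtype_mk (e.continuous.comp continuous_subtype_val) _
  have hpre : ∀ A : Set E, volume (⇑e ⁻¹' A) = volume A := by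
    intro A
    conv_rhs => rw [← e.measurePreserving.map_eq]
    exact (MeasurableEquiv.map_apply
      (μ := (volume : Measure E)) e.toHomeomorph.toMeasurableEquiv A).symm
  refine Measure.ext fun s hs => ?_
  rw [Measure.map_apply hfc.measurable hs, Measure.toSphere_apply' _ (hfc.measurable hs),
    Measure.toSphere_apply' _ hs]
  have hset : Subtype.val '' (f ⁻¹' s) = ⇑e ⁻¹' (Subtype.val '' s) := by
    ext x
    constructor
    · rintro ⟨t, ht, rfl⟩
      exact ⟨f t, ht, rfl⟩
    · rintro ⟨u, hu, huv⟩
      have hx : ‖x‖ = 1 := by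
        have h1 : ‖(u : E)‖ = 1 := by
          have := u.2; simpa [mem_sphere_iff_norm] using this
        rw [← e.norm_map x, ← huv, h1]
      refine ⟨⟨x, by simp [mem_sphere_iff_norm, hx]⟩, ?_, rfl⟩
      show f _ ∈ s
      have : f ⟨x, by simp [mem_sphere_iff_norm, hx]⟩ = u := Subtype.ext huv.symm
      rw [this]; exact hu
  rw [hset]
  have hsmul : Set.Ioo (0:ℝ) 1 • (⇑e ⁻¹' (Subtype.val '' s))
      = ⇑e ⁻¹' (Set.Ioo (0:ℝ) 1 • (Subtype.val '' s)) := by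
    ext x
    simp only [Set.mem_smul, Set.mem_preimage]
    constructor
    · rintro ⟨r, hr, y, hy, rfl⟩
      exact ⟨r, hr, e y, hy, (e.map_smul r y).symm⟩
    · rintro ⟨r, hr, u, hu, hru⟩
      refine ⟨r, hr, e.symm u, by simpa using hu, ?_⟩
      apply e.injective
      rw [e.map_smul]; simp [hru]
    
  rw [hsmul, hpre]

lemma unitSphereUniform_isProb (hd : 1 ≤ d) : IsProbabilityMeasure (unitSphereUniform d) := by
  constructor
  rw [unitSphereUniform, Measure.smul_apply, smul_eq_mul]
  refine ENNReal.inv_mul_cancel ?_ (measure_ne_top _ _)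
  rw [Measure.toSphere_apply_univ, finrank_euclideanSpace_fin]
  exact mul_ne_zero (Nat.cast_ne_zero.mpr (Nat.one_le_iff_ne_zero.mp hd))
    (measure_ball_pos _ _ one_pos).ne'

/-- sphericalUniform is invariant under a linear isometry equivalence. -/
lemma sphericalUniform_map_isometry (hd : 1 ≤ d)
    (e : EuclideanSpace ℝ (Fin d) ≃ₗᵢ[ℝ] EuclideanSpace ℝ (Fin d)) :
    (sphericalUniform d).map e = sphericalUniform d := by
  set E := EuclideanSpace ℝ (Fin d)
  haveI := unitSphereUniform_isProb hd
  set f : Metric.sphere (0 : E) 1 → Metric.sphere (0 : E) 1 :=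
    fun s => (⟨e s, by simp [mem_sphere_iff_norm]⟩ : Metric.sphere (0 : E) 1) with hf
  have hfc : Continuous f := Continuous.subtype_mk (e.continuous.comp continuous_subtype_val) _
  have hφ : Measurable (fun p : ℝ × Metric.sphere (0 : E) 1 => p.1 • (p.2 : E)) :=
    (continuous_fst.smul (continuous_subtype_val.comp continuous_snd)).measurable
  rw [sphericalUniform, Measure.map_map e.continuous.measurable hφ]
  have hcomp : (⇑e ∘ fun p : ℝ × Metric.sphere (0 : E) 1 => p.1 • (p.2 : E))
      = (fun p : ℝ × Metric.sphere (0 : E) 1 => p.1 • (p.2 : E)) ∘ (Prod.map id f) := by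
    funext p
    simp [f, e.map_smul]
  rw [hcomp, ← Measure.map_map hφ (measurable_id.prodMap hfc.measurable)]
  have hprod : ((volume.restrict (Set.Ico (0 : ℝ) 1)).prod (unitSphereUniform d)).map
      (Prod.map id f) = (volume.restrict (Set.Ico (0 : ℝ) 1)).prod (unitSphereUniform d) := by
    rw [← Measure.map_prod_map _ _ measurable_id hfc.measurable, Measure.map_id]
    congr 1
    rw [unitSphereUniform, Measure.map_smul, toSphere_map_isometry e]
  rw [hprod]

end aux

/-- equivariance of center-outward distribution functions.  Let `P` be an
absolutely continuous probability measure on `ℝ^d` and `Ψ` a convex potential whose gradient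
pushes `P` forward to the spherical uniform `U_d`.  For `v ∈ ℝ^d`, `a > 0` and an orthogonal
matrix `O`, set `Ψ*(z) := a Ψ(a⁻¹ Oᵀ (z − v))`.  Then (i) `Ψ*` is convex; (ii) wherever `Ψ`
has gradient `g` at `z`, `Ψ*` has gradient `O g` at `v + aOz`; (iii) the gradient of `Ψ*`
pushes the law of `v + aOZ` (for `Z ∼ P`) forward to `U_d`; in particular (iv) the map
`z ↦ O ∇Ψ(a⁻¹ Oᵀ (z − v))` pushes that law forward to `U_d`. -/
theorem centerOutward_equivariance {d : ℕ} (hd : 1 ≤ d)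
    (P : Measure (EuclideanSpace ℝ (Fin d))) [IsProbabilityMeasure P]
    (h_ac : P ≪ (volume : Measure (EuclideanSpace ℝ (Fin d))))
    (Ψ : EuclideanSpace ℝ (Fin d) → ℝ)
    (h_conv : ConvexOn ℝ Set.univ Ψ)
    (h_push : P.map (fun z => gradient Ψ z) = sphericalUniform d)
    (v : EuclideanSpace ℝ (Fin d)) (a : ℝ) (ha : 0 < a)
    (O : Matrix (Fin d) (Fin d) ℝ) (hO : O * Oᵀ = 1) :
    ConvexOn ℝ Set.univ
        (fun z => a * Ψ ((a⁻¹ : ℝ) • Matrix.toEuclideanLin Oᵀ (z - v)))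
    ∧ (∀ (z g : EuclideanSpace ℝ (Fin d)), HasGradientAt Ψ g z →
        HasGradientAt (fun z' => a * Ψ ((a⁻¹ : ℝ) • Matrix.toEuclideanLin Oᵀ (z' - v)))
          (Matrix.toEuclideanLin O g) (v + a • Matrix.toEuclideanLin O z))
    ∧ ((P.map (fun z => v + a • Matrix.toEuclideanLin O z)).map
        (fun z => gradient (fun z' => a * Ψ ((a⁻¹ : ℝ) • Matrix.toEuclideanLin Oᵀ (z' - v))) z)
          = sphericalUniform d)
    ∧ ((P.map (fun z => v + a • Matrix.toEuclideanLin O z)).map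
        (fun z => Matrix.toEuclideanLin O
          (gradient Ψ ((a⁻¹ : ℝ) • Matrix.toEuclideanLin Oᵀ (z - v))))
          = sphericalUniform d) := by
  set M : (EuclideanSpace ℝ (Fin d)) →ₗ[ℝ] (EuclideanSpace ℝ (Fin d)) := Matrix.toEuclideanLin O with hM
  set N : (EuclideanSpace ℝ (Fin d)) →ₗ[ℝ] (EuclideanSpace ℝ (Fin d)) := Matrix.toEuclideanLin Oᵀ with hN
  have hO' : Oᵀ * O = 1 := mul_eq_one_comm.mp hO
  have hNM : ∀ x : (EuclideanSpace ℝ (Fin d)), N (M x) = x := by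
    intro x
    simp only [hM, hN, toEuclideanLin_apply]
    simp [mulVec_mulVec, hO']
  have hMN : ∀ x : (EuclideanSpace ℝ (Fin d)), M (N x) = x := by
    intro x
    simp only [hM, hN, toEuclideanLin_apply]
    simp [mulVec_mulVec, hO]
  have hNadj : N = LinearMap.adjoint M := by
    rw [hM, hN, ← Matrix.toEuclideanLin_conjTranspose_eq_adjoint]
    congr 1
  have hadj : ∀ x y : (EuclideanSpace ℝ (Fin d)), inner ℝ (M x) y = (inner ℝ x (N y) : ℝ) := by
    intro x y
    rw [hNadj]
    exact (LinearMap.adjoint_inner_right M x y).symm ▸ rfl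
  have hinner : ∀ x y : (EuclideanSpace ℝ (Fin d)), inner ℝ (M x) (M y) = (inner ℝ x y : ℝ) := by
    intro x y
    rw [hadj x (M y), hNM]
  set e : (EuclideanSpace ℝ (Fin d)) ≃ₗᵢ[ℝ] (EuclideanSpace ℝ (Fin d)) :=
    LinearEquiv.isometryOfInner
      (LinearEquiv.ofLinear M N (LinearMap.ext hMN) (LinearMap.ext hNM)) hinner with he_def
  have he : ∀ x : (EuclideanSpace ℝ (Fin d)), e x = M x := fun x => by rw [he_def]; rfl
  have hMcont : Continuous fun z : (EuclideanSpace ℝ (Fin d)) => M z := M.continuous_of_finiteDimensional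
  have hNcont : Continuous fun z : (EuclideanSpace ℝ (Fin d)) => N z := N.continuous_of_finiteDimensional
  -- Part (i): convexity
  have part1 : ConvexOn ℝ Set.univ (fun z => a * Ψ ((a⁻¹ : ℝ) • N (z - v))) := by
    refine ⟨convex_univ, ?_⟩
    intro x _ y _ t s ht hs hts
    show a * Ψ ((a⁻¹:ℝ) • N (t • x + s • y - v))
        ≤ t • (a * Ψ ((a⁻¹:ℝ) • N (x - v))) + s • (a * Ψ ((a⁻¹:ℝ) • N (y - v)))
    have hv : t • x + s • y - v = t • (x - v) + s • (y - v) := by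
      rw [smul_sub, smul_sub, sub_add_sub_comm, ← add_smul, hts, one_smul]
    have hA : (a⁻¹ : ℝ) • N (t • x + s • y - v)
        = t • ((a⁻¹ : ℝ) • N (x - v)) + s • ((a⁻¹ : ℝ) • N (y - v)) := by
      rw [hv, map_add, N.map_smul, N.map_smul, smul_add, smul_comm, smul_comm (a⁻¹ : ℝ) s]
    rw [hA]
    have hΨ := h_conv.2 (Set.mem_univ ((a⁻¹ : ℝ) • N (x - v)))
      (Set.mem_univ ((a⁻¹ : ℝ) • N (y - v))) ht hs hts
    calc a * Ψ (t • ((a⁻¹:ℝ) • N (x - v)) + s • ((a⁻¹:ℝ) • N (y - v)))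
        ≤ a * (t • Ψ ((a⁻¹:ℝ) • N (x - v)) + s • Ψ ((a⁻¹:ℝ) • N (y - v))) :=
          mul_le_mul_of_nonneg_left hΨ ha.le
      _ = t • (a * Ψ ((a⁻¹:ℝ) • N (x - v))) + s • (a * Ψ ((a⁻¹:ℝ) • N (y - v))) := by
          simp only [smul_eq_mul]; ring
  -- Part (ii): gradient chain rule
  have harg : ∀ z : (EuclideanSpace ℝ (Fin d)), (a⁻¹ : ℝ) • N ((v + a • M z) - v) = z := by
    intro z
    rw [add_sub_cancel_left, N.map_smul, hNM, smul_smul, inv_mul_cancel₀ ha.ne', one_smul]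
  have part2 : ∀ (z g : (EuclideanSpace ℝ (Fin d))), HasGradientAt Ψ g z →
      HasGradientAt (fun z' => a * Ψ ((a⁻¹ : ℝ) • N (z' - v))) (M g) (v + a • M z) := by
    intro z g hg
    rw [hasGradientAt_iff_hasFDerivAt] at hg ⊢
    set Ncl : (EuclideanSpace ℝ (Fin d)) →L[ℝ] (EuclideanSpace ℝ (Fin d)) := LinearMap.toContinuousLinearMap N with hNcl
    have hin : HasFDerivAt (fun z' : (EuclideanSpace ℝ (Fin d)) => (a⁻¹ : ℝ) • N (z' - v)) ((a⁻¹ : ℝ) • Ncl)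
        (v + a • M z) := by
      have h1 : HasFDerivAt (fun z' : (EuclideanSpace ℝ (Fin d)) => z' - v) (ContinuousLinearMap.id ℝ (EuclideanSpace ℝ (Fin d))) (v + a • M z) :=
        (hasFDerivAt_id _).sub_const v
      have h2 := (((a⁻¹ : ℝ) • Ncl).hasFDerivAt (x := v + a • M z - v)).comp (v + a • M z) h1
      rw [ContinuousLinearMap.comp_id] at h2
      exact h2
    have hg' : HasFDerivAt Ψ ((InnerProductSpace.toDual ℝ (EuclideanSpace ℝ (Fin d))) g)
        ((a⁻¹ : ℝ) • N ((v + a • M z) - v)) := by rw [harg z]; exact hg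
    have hcomp := (hg'.comp (v + a • M z) hin).const_mul a
    refine hcomp.congr_fderiv (Eq.symm ?_)
    refine ContinuousLinearMap.ext fun w => ?_
    simp only [ContinuousLinearMap.coe_smul', Pi.smul_apply, ContinuousLinearMap.coe_comp',
      Function.comp_apply, InnerProductSpace.toDual_apply_apply, smul_eq_mul,
      LinearMap.coe_toContinuousLinearMap', hNcl]
    rw [hadj g w, real_inner_smul_right, ← mul_assoc, mul_inv_cancel₀ ha.ne', one_mul]
  -- gradient identity everywhere
  have key : ∀ z : (EuclideanSpace ℝ (Fin d)), gradient (fun z' => a * Ψ ((a⁻¹ : ℝ) • N (z' - v))) (v + a • M z)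
      = M (gradient Ψ z) := by
    intro z
    by_cases hz : DifferentiableAt ℝ Ψ z
    · exact (part2 z _ hz.hasGradientAt).gradient
    · have hz' : ¬ DifferentiableAt ℝ (fun z' => a * Ψ ((a⁻¹ : ℝ) • N (z' - v)))
          (v + a • M z) := by
        intro hdiff
        apply hz
        have hΨeq : Ψ = fun z' => a⁻¹ * ((fun z'' => a * Ψ ((a⁻¹ : ℝ) • N (z'' - v)))
            (v + a • M z')) := by
          funext z'
          simp only
          rw [harg z', ← mul_assoc, inv_mul_cancel₀ ha.ne', one_mul]
        rw [hΨeq]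
        have hT : DifferentiableAt ℝ (fun z' : (EuclideanSpace ℝ (Fin d)) => v + a • M z') z :=
          (DifferentiableAt.const_smul
            ((LinearMap.toContinuousLinearMap M).differentiableAt (x := z)) a).const_add v
        exact (hdiff.comp z hT).const_mul a⁻¹
      rw [gradient_eq_zero_of_not_differentiableAt hz,
        gradient_eq_zero_of_not_differentiableAt hz', map_zero]
  -- measurable equivalence z ↦ v + a • M z
  set T : (EuclideanSpace ℝ (Fin d)) ≃ᵐ (EuclideanSpace ℝ (Fin d)) := Homeomorph.toMeasurableEquiv
    { toFun := fun z : (EuclideanSpace ℝ (Fin d)) => v + a • M z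
      invFun := fun z : (EuclideanSpace ℝ (Fin d)) => (a⁻¹ : ℝ) • N (z - v)
      left_inv := fun z => harg z
      right_inv := fun z => by
        show v + a • M ((a⁻¹:ℝ) • N (z - v)) = z
        rw [M.map_smul, hMN, smul_smul, mul_inv_cancel₀ ha.ne', one_smul]
        abel
      continuous_toFun := continuous_const.add (hMcont.const_smul a)
      continuous_invFun := ((hNcont.comp (continuous_id.sub continuous_const)).const_smul
        (a⁻¹ : ℝ)) } with hT
  have hTfun : (fun z : (EuclideanSpace ℝ (Fin d)) => v + a • M z) = ⇑T := rfl
  -- main pushforward lemma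
  have main : ∀ G : (EuclideanSpace ℝ (Fin d)) → (EuclideanSpace ℝ (Fin d)), (∀ z : (EuclideanSpace ℝ (Fin d)), G (v + a • M z) = M (gradient Ψ z)) →
      (P.map (fun z : (EuclideanSpace ℝ (Fin d)) => v + a • M z)).map G = sphericalUniform d := by
    intro G hG
    by_cases haem : AEMeasurable (fun z => gradient Ψ z) P
    · have hGT : (G ∘ ⇑T) = fun z => M (gradient Ψ z) := funext hG
      have hGmeas : AEMeasurable G (P.map ⇑T) := by
        rw [T.measurableEmbedding.aemeasurable_map_iff, hGT]
        exact hMcont.measurable.comp_aemeasurable haem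
      rw [hTfun, AEMeasurable.map_map_of_aemeasurable hGmeas T.measurable.aemeasurable, hGT]
      rw [show (fun z => M (gradient Ψ z))
          = (fun x : (EuclideanSpace ℝ (Fin d)) => M x) ∘ (fun z => gradient Ψ z) from rfl,
        ← AEMeasurable.map_map_of_aemeasurable hMcont.measurable.aemeasurable haem, h_push]
      exact sphericalUniform_map_isometry hd e
    · have h0 : P.map (fun z => gradient Ψ z) = 0 := Measure.map_of_not_aemeasurable haem
      rw [h0] at h_push
      have hGnot : ¬ AEMeasurable G (P.map ⇑T) := by
        intro hGm
        apply haem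
        rw [T.measurableEmbedding.aemeasurable_map_iff,
          (funext hG : (G ∘ ⇑T) = fun z => M (gradient Ψ z))] at hGm
        have hgr : (fun z => gradient Ψ z)
            = (fun x : (EuclideanSpace ℝ (Fin d)) => N x) ∘ (fun z => M (gradient Ψ z)) := by
          funext z; simp [hNM]
        rw [hgr]
        exact hNcont.measurable.comp_aemeasurable hGm
      rw [hTfun, Measure.map_of_not_aemeasurable hGnot, ← h_push]
  refine ⟨part1, part2, ?_, ?_⟩
  · exact main _ (fun z => key z)
  · refine main _ (fun z => ?_)
    rw [harg z]
end

section
/- Let m ≥ 2, let H be a subgroup of S_m with cardinality card(H), and let f1 : (ℝ^{d1})^m → ℝ, f2 : (ℝ^{d2})^m → ℝ. Let n ≥ m and let z_i = (y_{1i}, y_{2i}) and z'_i = (y'_{1i}, y'_{2i}), i = 1,…,n, be two arrays of points in ℝ^{d1} × ℝ^{d2}. Define U := (n)_m^{-1} Σ k_{f1,f2,H}(z_{i_1},…,z_{i_m}) and U' := (n)_m^{-1} Σ k_{f1,f2,H}(z'_{i_1},…,z'_{i_m}), where both sums range over all (n)_m := n!/(n−m)! m-tuples (i_1,…,i_m)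 of distinct indices in {1,…,n}. If C_1, C_2 ≥ 0 are such that |f_k(y_{k i_1},…,y_{k i_m})| ≤ C_k and |f_k(y'_{k i_1},…,y'_{k i_m})| ≤ C_k for all such tuples and k = 1,2, then |U' − U| ≤ card(H)² [ C_1 · (n)_m^{-1} Σ |f_2(y'_{2 i_1},…,y'_{2 i_m}) − f_2(y_{2 i_1},…,y_{2 i_m})| + C_2 · (n)_m^{-1} Σ |f_1(y'_{1 i_1},…,y'_{1 i_m}) − f_1(y_{1 i_1},…,y_{1 i_m})| ], the sums again ranging over all m-tuples of distinct indices. -/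
/-- The U-statistic `(n)_m⁻¹ Σ_{(i_1,…,i_m) distinct} k_{f1,f2,H}(z_{i_1},…,z_{i_m})`,
the sum ranging over all `m`-tuples of distinct indices (injective `ι : Fin m → Fin n`). -/
noncomputable def uStat {m n : ℕ} {E1 E2 : Type*} (H : Finset (Equiv.Perm (Fin m)))
    (f1 : (Fin m → E1) → ℝ) (f2 : (Fin m → E2) → ℝ)
    (y1 : Fin n → E1) (y2 : Fin n → E2) : ℝ :=
  ((n.descFactorial m : ℝ))⁻¹ *
    ∑ ι ∈ Finset.univ.filter (fun ι : Fin m → Fin n => Function.Injective ι),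
      depKernel H f1 f2 (fun j => (y1 (ι j), y2 (ι j)))

lemma aux_sign_abs {m : ℕ} (σ : Equiv.Perm (Fin m)) :
    |((Equiv.Perm.sign σ : ℤ) : ℝ)| = 1 := by
  rcases Int.units_eq_one_or (Equiv.Perm.sign σ) with h1 | h1 <;> simp [h1]

lemma permSum_abs_le {m : ℕ} {E : Type*} (H : Finset (Equiv.Perm (Fin m)))
    (f : (Fin m → E) → ℝ) (x : Fin m → E) (C : ℝ)
    (h : ∀ σ : Equiv.Perm (Fin m), |f (fun i => x (σ i))| ≤ C) :
    |permSum H f x| ≤ (H.card : ℝ) * C := by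
  calc |permSum H f x|
      ≤ ∑ σ ∈ H, |((Equiv.Perm.sign σ : ℤ) : ℝ) * f (fun i => x (σ i))| :=
        Finset.abs_sum_le_sum_abs _ _
    _ ≤ ∑ _σ ∈ H, C := by
        refine Finset.sum_le_sum fun σ _ => ?_
        rw [abs_mul, aux_sign_abs, one_mul]; exact h σ
    _ = (H.card : ℝ) * C := by simp [Finset.sum_const, nsmul_eq_mul]

lemma permSum_sub_abs_le {m : ℕ} {E : Type*} (H : Finset (Equiv.Perm (Fin m)))
    (f : (Fin m → E) → ℝ) (x x' : Fin m → E) :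
    |permSum H f x' - permSum H f x|
      ≤ ∑ σ ∈ H, |f (fun i => x' (σ i)) - f (fun i => x (σ i))| := by
  rw [permSum, permSum, ← Finset.sum_sub_distrib]
  refine (Finset.abs_sum_le_sum_abs _ _).trans (Finset.sum_le_sum fun σ _ => ?_)
  rw [← mul_sub, abs_mul, aux_sign_abs, one_mul]

/-- stability bound for U-statistics built from the dependence kernel.
If the kernels are bounded by `C1` and `C2` along all distinct-index tuples of both arrays,
then the difference of the two U-statistics is controlled by `card(H)²` times the average
absolute kernel differences. -/

theorem uStat_difference_bound {m n : ℕ} {E1 E2 : Type*} (hm : 2 ≤ m) (hn : m ≤ n)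
    (H : Finset (Equiv.Perm (Fin m)))
    (hH_one : (1 : Equiv.Perm (Fin m)) ∈ H)
    (hH_mul : ∀ σ ∈ H, ∀ τ ∈ H, σ * τ ∈ H)
    (hH_inv : ∀ σ ∈ H, σ⁻¹ ∈ H)
    (f1 : (Fin m → E1) → ℝ) (f2 : (Fin m → E2) → ℝ)
    (y1 y1' : Fin n → E1) (y2 y2' : Fin n → E2)
    (C1 C2 : ℝ) (hC1 : 0 ≤ C1) (hC2 : 0 ≤ C2)
    (hf1_bdd : ∀ ι : Fin m → Fin n, Function.Injective ι →
      |f1 (y1 ∘ ι)| ≤ C1 ∧ |f1 (y1' ∘ ι)| ≤ C1)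
    (hf2_bdd : ∀ ι : Fin m → Fin n, Function.Injective ι →
      |f2 (y2 ∘ ι)| ≤ C2 ∧ |f2 (y2' ∘ ι)| ≤ C2) :
    |uStat H f1 f2 y1' y2' - uStat H f1 f2 y1 y2|
      ≤ (H.card : ℝ) ^ 2 *
        (C1 * (((n.descFactorial m : ℝ))⁻¹ *
            ∑ ι ∈ Finset.univ.filter (fun ι : Fin m → Fin n => Function.Injective ι),
              |f2 (y2' ∘ ι) - f2 (y2 ∘ ι)|)
          + C2 * (((n.descFactorial m : ℝ))⁻¹ *
            ∑ ι ∈ Finset.univ.filter (fun ι : Fin m → Fin n => Function.Injective ι),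
              |f1 (y1' ∘ ι) - f1 (y1 ∘ ι)|)) := by
    classical
  set F := Finset.univ.filter (fun ι : Fin m → Fin n => Function.Injective ι) with hF
  have hc : (0:ℝ) ≤ ((n.descFactorial m : ℝ))⁻¹ := by positivity
  have hreindex : ∀ (σ : Equiv.Perm (Fin m)) (g : (Fin m → Fin n) → ℝ),
      (∑ ι ∈ F, g (fun j => ι (σ j))) = ∑ ι ∈ F, g ι := by
    intro σ g
    refine Finset.sum_nbij' (fun ι => fun j => ι (σ j)) (fun ι => fun j => ι (σ.symm j))
      ?_ ?_ ?_ ?_ ?_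
    · intro ι hι
      simp only [hF, Finset.mem_filter, Finset.mem_univ, true_and] at *
      exact hι.comp σ.injective
    · intro ι hι
      simp only [hF, Finset.mem_filter, Finset.mem_univ, true_and] at *
      exact hι.comp σ.symm.injective
    · intro ι _; funext j; simp
    · intro ι _; funext j; simp
    · intro ι _; rfl
  -- pointwise bound on the kernel difference
  have hpt : ∀ ι ∈ F,
      |depKernel H f1 f2 (fun j => (y1' (ι j), y2' (ι j)))
        - depKernel H f1 f2 (fun j => (y1 (ι j), y2 (ι j)))|
      ≤ (H.card : ℝ) * C1 * ∑ σ ∈ H, |f2 (fun i => y2' (ι (σ i))) - f2 (fun i => y2 (ι (σ i)))|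
        + (H.card : ℝ) * C2 * ∑ σ ∈ H, |f1 (fun i => y1' (ι (σ i))) - f1 (fun i => y1 (ι (σ i)))| := by
    intro ι hι
    have hιinj : Function.Injective ι := by
      simpa [hF, Finset.mem_filter] using hι
    set A := permSum H f1 (fun i => y1 (ι i))
    set A' := permSum H f1 (fun i => y1' (ι i))
    set B := permSum H f2 (fun i => y2 (ι i))
    set B' := permSum H f2 (fun i => y2' (ι i))
    have hA' : |A'| ≤ (H.card : ℝ) * C1 := by
      refine permSum_abs_le H f1 _ C1 fun σ => ?_
      exact (hf1_bdd (fun j => ι (σ j)) (hιinj.comp σ.injective)).2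
    have hB : |B| ≤ (H.card : ℝ) * C2 := by
      refine permSum_abs_le H f2 _ C2 fun σ => ?_
      exact (hf2_bdd (fun j => ι (σ j)) (hιinj.comp σ.injective)).1
    have hdB : |B' - B|
        ≤ ∑ σ ∈ H, |f2 (fun i => y2' (ι (σ i))) - f2 (fun i => y2 (ι (σ i)))| :=
      permSum_sub_abs_le H f2 _ _
    have hdA : |A' - A|
        ≤ ∑ σ ∈ H, |f1 (fun i => y1' (ι (σ i))) - f1 (fun i => y1 (ι (σ i)))| :=
      permSum_sub_abs_le H f1 _ _
    have key : |A' * B' - A * B| ≤ |A'| * |B' - B| + |B| * |A' - A| := by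
      have : A' * B' - A * B = A' * (B' - B) + B * (A' - A) := by ring
      rw [this]
      calc |A' * (B' - B) + B * (A' - A)| ≤ |A' * (B' - B)| + |B * (A' - A)| := abs_add_le _ _
        _ = |A'| * |B' - B| + |B| * |A' - A| := by rw [abs_mul, abs_mul]
    have h2 : |A'| * |B' - B| + |B| * |A' - A|
        ≤ (H.card : ℝ) * C1 * ∑ σ ∈ H, |f2 (fun i => y2' (ι (σ i))) - f2 (fun i => y2 (ι (σ i)))|
          + (H.card : ℝ) * C2 * ∑ σ ∈ H, |f1 (fun i => y1' (ι (σ i))) - f1 (fun i => y1 (ι (σ i)))| := by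
      gcongr <;> positivity
    exact (key.trans h2)
  -- sum of the pointwise bounds
  have hsum1 : ∑ ι ∈ F, ∑ σ ∈ H, |f2 (fun i => y2' (ι (σ i))) - f2 (fun i => y2 (ι (σ i)))|
      = (H.card : ℝ) * ∑ ι ∈ F, |f2 (y2' ∘ ι) - f2 (y2 ∘ ι)| := by
    rw [Finset.sum_comm]
    trans (∑ _σ ∈ H, ∑ ι ∈ F, |f2 (y2' ∘ ι) - f2 (y2 ∘ ι)|)
    · exact Finset.sum_congr rfl fun σ _ =>
        hreindex σ (fun ι => |f2 (y2' ∘ ι) - f2 (y2 ∘ ι)|)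
    · simp [Finset.sum_const, nsmul_eq_mul]
  have hsum2 : ∑ ι ∈ F, ∑ σ ∈ H, |f1 (fun i => y1' (ι (σ i))) - f1 (fun i => y1 (ι (σ i)))|
      = (H.card : ℝ) * ∑ ι ∈ F, |f1 (y1' ∘ ι) - f1 (y1 ∘ ι)| := by
    rw [Finset.sum_comm]
    trans (∑ _σ ∈ H, ∑ ι ∈ F, |f1 (y1' ∘ ι) - f1 (y1 ∘ ι)|)
    · exact Finset.sum_congr rfl fun σ _ =>
        hreindex σ (fun ι => |f1 (y1' ∘ ι) - f1 (y1 ∘ ι)|)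
    · simp [Finset.sum_const, nsmul_eq_mul]
  have main : |uStat H f1 f2 y1' y2' - uStat H f1 f2 y1 y2|
      ≤ ((n.descFactorial m : ℝ))⁻¹ *
        ((H.card : ℝ) * C1 * ∑ ι ∈ F, ∑ σ ∈ H,
            |f2 (fun i => y2' (ι (σ i))) - f2 (fun i => y2 (ι (σ i)))|
          + (H.card : ℝ) * C2 * ∑ ι ∈ F, ∑ σ ∈ H,
            |f1 (fun i => y1' (ι (σ i))) - f1 (fun i => y1 (ι (σ i)))|) := by
    rw [uStat, uStat, ← mul_sub, abs_mul, abs_of_nonneg hc, ← Finset.sum_sub_distrib]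
    refine mul_le_mul_of_nonneg_left ?_ hc
    calc |∑ ι ∈ F, (depKernel H f1 f2 (fun j => (y1' (ι j), y2' (ι j)))
            - depKernel H f1 f2 (fun j => (y1 (ι j), y2 (ι j))))|
        ≤ ∑ ι ∈ F, |depKernel H f1 f2 (fun j => (y1' (ι j), y2' (ι j)))
            - depKernel H f1 f2 (fun j => (y1 (ι j), y2 (ι j)))| :=
          Finset.abs_sum_le_sum_abs _ _
      _ ≤ ∑ ι ∈ F, ((H.card : ℝ) * C1 * ∑ σ ∈ H,
            |f2 (fun i => y2' (ι (σ i))) - f2 (fun i => y2 (ι (σ i)))|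
          + (H.card : ℝ) * C2 * ∑ σ ∈ H,
            |f1 (fun i => y1' (ι (σ i))) - f1 (fun i => y1 (ι (σ i)))|) :=
          Finset.sum_le_sum hpt
      _ = _ := by rw [Finset.sum_add_distrib, ← Finset.mul_sum, ← Finset.mul_sum]
  refine main.trans_eq ?_
  rw [hsum1, hsum2]
  ring
end

section
/- Let d ≥ 1 and 0 < δ ≤ 1/4. Let y_1, y_2, y_5, y'_1, y'_2, y'_5 ∈ ℝ^d satisfy ‖y_i − y'_i‖ ≤ δ for i ∈ {1,2,5}, min{‖y_1 − y_5‖, ‖y_2 − y_5‖} ≥ √δ, and (3/2)√δ ≤ Arc(y_1 − y_5, y_2 − y_5) ≤ 1/2 − (3/2)√δ. Then |Arc(y_1 − y_5, y_2 − y_5) − Arc(y'_1 − y'_5, y'_2 − y'_5)| ≤ (3/2)√δ. -/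
open Real InnerProductGeometry

section helpers

variable {V : Type*} [NormedAddCommGroup V] [InnerProductSpace ℝ V]

local notation "⟪" x ", " y "⟫" => @inner ℝ _ _ x y

/-- Triangle inequality for the unoriented angle. -/
lemma my_angle_triangle (x y z : V) : angle x z ≤ angle x y + angle y z := by
  rcases le_or_gt π (angle x y + angle y z) with h | h
  · exact (angle_le_pi x z).trans h
  rcases eq_or_ne y 0 with rfl | hy
  · rw [angle_zero_right, angle_zero_left] at h; linarith
  rcases eq_or_ne x 0 with rfl | hx
  · rw [angle_zero_left, angle_zero_left]; linarith [angle_nonneg y z]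
  rcases eq_or_ne z 0 with rfl | hz
  · rw [angle_zero_right, angle_zero_right]; linarith [angle_nonneg x y]
  have hA : (0:ℝ) < ‖x‖ := norm_pos_iff.mpr hx
  have hB : (0:ℝ) < ‖y‖ := norm_pos_iff.mpr hy
  have hC : (0:ℝ) < ‖z‖ := norm_pos_iff.mpr hz
  by_contra hc
  push_neg at hc
  have h0 : (0:ℝ) ≤ angle x y + angle y z :=
    add_nonneg (angle_nonneg _ _) (angle_nonneg _ _)
  have hcos : Real.cos (angle x z) < Real.cos (angle x y + angle y z) :=
    Real.strictAntiOn_cos ⟨h0, h.le⟩ ⟨angle_nonneg x z, angle_le_pi x z⟩ hc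
  set P := Real.sqrt (⟪x, x⟫ * ⟪y, y⟫ - ⟪x, y⟫ * ⟪x, y⟫) with hPdef
  set Q := Real.sqrt (⟪y, y⟫ * ⟪z, z⟫ - ⟪y, z⟫ * ⟪y, z⟫) with hQdef
  have hP0 : 0 ≤ P := Real.sqrt_nonneg _
  have hQ0 : 0 ≤ Q := Real.sqrt_nonneg _
  have hxx : ⟪x, x⟫ = ‖x‖ * ‖x‖ := real_inner_self_eq_norm_mul_norm x
  have hyy : ⟪y, y⟫ = ‖y‖ * ‖y‖ := real_inner_self_eq_norm_mul_norm y
  have hzz : ⟪z, z⟫ = ‖z‖ * ‖z‖ := real_inner_self_eq_norm_mul_norm z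
  have hP2 : P ^ 2 = ⟪x, x⟫ * ⟪y, y⟫ - ⟪x, y⟫ * ⟪x, y⟫ :=
    Real.sq_sqrt (by nlinarith [real_inner_mul_inner_self_le x y])
  have hQ2 : Q ^ 2 = ⟪y, y⟫ * ⟪z, z⟫ - ⟪y, z⟫ * ⟪y, z⟫ :=
    Real.sq_sqrt (by nlinarith [real_inner_mul_inner_self_le y z])
  have hsinA : Real.sin (angle x y) = P / (‖x‖ * ‖y‖) := by
    rw [eq_div_iff (by positivity)]; exact sin_angle_mul_norm_mul_norm x y
  have hsinB : Real.sin (angle y z) = Q / (‖y‖ * ‖z‖) := by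
    rw [eq_div_iff (by positivity)]; exact sin_angle_mul_norm_mul_norm y z
  clear_value P Q
  -- Cauchy-Schwarz on the projections away from y
  have hCS := real_inner_mul_inner_self_le
    (‖y‖ ^ 2 • x - ⟪x, y⟫ • y) (‖y‖ ^ 2 • z - ⟪y, z⟫ • y)
  have e1 : ⟪‖y‖ ^ 2 • x - ⟪x, y⟫ • y, ‖y‖ ^ 2 • z - ⟪y, z⟫ • y⟫
      = ‖y‖ ^ 2 * (‖y‖ ^ 2 * ⟪x, z⟫ - ⟪x, y⟫ * ⟪y, z⟫) := by
    simp only [inner_sub_left, inner_sub_right, real_inner_smul_left, real_inner_smul_right,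
      real_inner_comm x y, real_inner_comm y z]
    rw [hyy]; ring
  have e2 : ⟪‖y‖ ^ 2 • x - ⟪x, y⟫ • y, ‖y‖ ^ 2 • x - ⟪x, y⟫ • y⟫ = ‖y‖ ^ 2 * P ^ 2 := by
    simp only [inner_sub_left, inner_sub_right, real_inner_smul_left, real_inner_smul_right]
    rw [real_inner_comm x y, hyy, hP2, hxx, hyy]; ring
  have e3 : ⟪‖y‖ ^ 2 • z - ⟪y, z⟫ • y, ‖y‖ ^ 2 • z - ⟪y, z⟫ • y⟫ = ‖y‖ ^ 2 * Q ^ 2 := by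
    simp only [inner_sub_left, inner_sub_right, real_inner_smul_left, real_inner_smul_right]
    rw [real_inner_comm y z, hyy, hQ2, hyy, hzz]; ring
  rw [e1, e2, e3] at hCS
  have key2 : (⟪x, y⟫ * ⟪y, z⟫ - ‖y‖ ^ 2 * ⟪x, z⟫) ^ 2 * (‖y‖ ^ 2 * ‖y‖ ^ 2)
      ≤ (P * Q) ^ 2 * (‖y‖ ^ 2 * ‖y‖ ^ 2) := by
    calc (⟪x, y⟫ * ⟪y, z⟫ - ‖y‖ ^ 2 * ⟪x, z⟫) ^ 2 * (‖y‖ ^ 2 * ‖y‖ ^ 2)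
        = ‖y‖ ^ 2 * (‖y‖ ^ 2 * ⟪x, z⟫ - ⟪x, y⟫ * ⟪y, z⟫)
          * (‖y‖ ^ 2 * (‖y‖ ^ 2 * ⟪x, z⟫ - ⟪x, y⟫ * ⟪y, z⟫)) := by ring
      _ ≤ ‖y‖ ^ 2 * P ^ 2 * (‖y‖ ^ 2 * Q ^ 2) := hCS
      _ = (P * Q) ^ 2 * (‖y‖ ^ 2 * ‖y‖ ^ 2) := by ring
  have key3 : (⟪x, y⟫ * ⟪y, z⟫ - ‖y‖ ^ 2 * ⟪x, z⟫) ^ 2 ≤ (P * Q) ^ 2 :=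
    le_of_mul_le_mul_right key2 (by positivity)
  have key : ⟪x, y⟫ * ⟪y, z⟫ - ‖y‖ ^ 2 * ⟪x, z⟫ ≤ P * Q := by
    nlinarith [key3, mul_nonneg hP0 hQ0]
  have hmain : Real.cos (angle x y + angle y z) ≤ Real.cos (angle x z) := by
    rw [Real.cos_add, cos_angle, cos_angle, cos_angle, hsinA, hsinB,
      div_mul_div_comm, div_mul_div_comm, div_sub_div_same,
      div_le_div_iff₀ (by positivity) (by positivity)]
    calc (⟪x, y⟫ * ⟪y, z⟫ - P * Q) * (‖x‖ * ‖z‖)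
        ≤ (‖y‖ ^ 2 * ⟪x, z⟫) * (‖x‖ * ‖z‖) := by
          apply mul_le_mul_of_nonneg_right (by linarith) (by positivity)
      _ = ⟪x, z⟫ * (‖x‖ * ‖y‖ * (‖y‖ * ‖z‖)) := by ring
  linarith

/-- Perturbation bound for the angle. -/
lemma my_angle_perturb {u u' : V} (δ : ℝ) (hδ0 : 0 < δ) (hδ : δ ≤ 1 / 36)
    (hu : Real.sqrt δ ≤ ‖u‖) (hd : ‖u - u'‖ ≤ 2 * δ) :
    angle u u' ≤ π * Real.sqrt δ := by
  have hs0 : 0 < Real.sqrt δ := Real.sqrt_pos.mpr hδ0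
  have hdd : Real.sqrt δ * Real.sqrt δ = δ := Real.mul_self_sqrt hδ0.le
  have hs6 : Real.sqrt δ ≤ 1 / 6 := by
    have : Real.sqrt δ ≤ Real.sqrt (1 / 36) := Real.sqrt_le_sqrt hδ
    rwa [show (1:ℝ)/36 = (1/6)^2 by norm_num, Real.sqrt_sq (by norm_num)] at this
  have hA : (0:ℝ) < ‖u‖ := lt_of_lt_of_le hs0 hu
  have h2d : 2 * δ ≤ (1/3) * Real.sqrt δ := by nlinarith
  have hu'pos : (0:ℝ) < ‖u'‖ := by
    have := norm_sub_norm_le u u'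
    nlinarith
  have hinner : (0:ℝ) ≤ ⟪u, u'⟫ := by
    have e : ⟪u, u'⟫ = ⟪u, u⟫ - ⟪u, u - u'⟫ := by
      rw [inner_sub_right]; ring
    have h1 := real_inner_le_norm u (u - u')
    have h2 := real_inner_self_eq_norm_mul_norm u
    nlinarith [norm_nonneg (u - u')]
  have hhalf : angle u u' ≤ π / 2 := by
    rw [angle]
    exact Real.arccos_le_pi_div_two.mpr (by positivity)
  have hsin := sin_angle_mul_norm_mul_norm u u'
  have hD : ‖u - u'‖ ^ 2 = ‖u‖ ^ 2 - 2 * ⟪u, u'⟫ + ‖u'‖ ^ 2 := norm_sub_sq_real u u'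
  have harg : ⟪u, u⟫ * ⟪u', u'⟫ - ⟪u, u'⟫ * ⟪u, u'⟫ ≤ (‖u'‖ * ‖u - u'‖) ^ 2 := by
    rw [real_inner_self_eq_norm_mul_norm, real_inner_self_eq_norm_mul_norm]
    nlinarith [sq_nonneg (⟪u, u'⟫ - ‖u'‖ ^ 2)]
  have hsqrt : Real.sqrt (⟪u, u⟫ * ⟪u', u'⟫ - ⟪u, u'⟫ * ⟪u, u'⟫) ≤ ‖u'‖ * ‖u - u'‖ := by
    calc Real.sqrt (⟪u, u⟫ * ⟪u', u'⟫ - ⟪u, u'⟫ * ⟪u, u'⟫)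
        ≤ Real.sqrt ((‖u'‖ * ‖u - u'‖) ^ 2) := Real.sqrt_le_sqrt harg
      _ = ‖u'‖ * ‖u - u'‖ := Real.sqrt_sq (by positivity)
  have h1 : Real.sin (angle u u') * (‖u‖ * ‖u'‖) ≤ ‖u'‖ * ‖u - u'‖ := by
    rw [hsin]; exact hsqrt
  have step1 : Real.sin (angle u u') * ‖u‖ ≤ 2 * δ := by
    have h2 : ‖u'‖ * ‖u - u'‖ ≤ ‖u'‖ * (2 * δ) := mul_le_mul_of_nonneg_left hd hu'pos.le
    nlinarith [h1.trans h2, hu'pos]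
  have hsinle : Real.sin (angle u u') ≤ 2 * Real.sqrt δ := by
    have h3 : 2 * Real.sqrt δ * Real.sqrt δ ≤ 2 * Real.sqrt δ * ‖u‖ :=
      mul_le_mul_of_nonneg_left hu (by positivity)
    nlinarith [step1, hdd, hA]
  have hms := Real.mul_le_sin (angle_nonneg u u') hhalf
  have h5 : 2 / π * angle u u' ≤ 2 * Real.sqrt δ := hms.trans hsinle
  have hπ : (0:ℝ) < π := Real.pi_pos
  have h6 : π / 2 * (2 / π * angle u u') = angle u u' := by field_simp
  have h7 := mul_le_mul_of_nonneg_left h5 (by positivity : (0:ℝ) ≤ π / 2)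
  have h8 : π / 2 * (2 * Real.sqrt δ) = π * Real.sqrt δ := by ring
  linarith

/-- Combined stability bound for the angle. -/
lemma my_angle_stability {u v u' v' : V} (δ : ℝ) (hδ0 : 0 < δ) (h36 : δ ≤ 1 / 36)
    (hu : Real.sqrt δ ≤ ‖u‖) (hv : Real.sqrt δ ≤ ‖v‖)
    (hdu : ‖u - u'‖ ≤ 2 * δ) (hdv : ‖v - v'‖ ≤ 2 * δ) :
    |angle u v - angle u' v'| ≤ 2 * π * Real.sqrt δ := by
  have hpu := my_angle_perturb δ hδ0 h36 hu hdu
  have hpv := my_angle_perturb δ hδ0 h36 hv hdv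
  have t1 : angle u v ≤ angle u u' + angle u' v' + angle v' v :=
    le_trans (my_angle_triangle u u' v) (by linarith [my_angle_triangle u' v' v])
  have t2 : angle u' v' ≤ angle u' u + angle u v + angle v v' :=
    le_trans (my_angle_triangle u' u v') (by linarith [my_angle_triangle u v v'])
  rw [angle_comm u' u] at t2
  rw [angle_comm v' v] at t1
  rw [abs_le]
  constructor <;> linarith

end helpers





/-- `Arc(u,v) := (2π)⁻¹ arccos(⟨u,v⟩/(‖u‖‖v‖))` if `u ≠ 0` and `v ≠ 0`, and `0` otherwise. -/
noncomputable def Arc {d : ℕ} (u v : EuclideanSpace ℝ (Fin d)) : ℝ :=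
  letI := Classical.propDecidable (u ≠ 0 ∧ v ≠ 0)
  if u ≠ 0 ∧ v ≠ 0 then (2 * Real.pi)⁻¹ * Real.arccos ((inner ℝ u v : ℝ) / (‖u‖ * ‖v‖)) else 0


lemma my_arc_eq {d : ℕ} {u v : EuclideanSpace ℝ (Fin d)} (hu : u ≠ 0) (hv : v ≠ 0) :
    Arc u v = (2 * Real.pi)⁻¹ * InnerProductGeometry.angle u v := by
  simp only [Arc]
  rw [if_pos ⟨hu, hv⟩]
  rfl

/-- stability of the normalized angle.  If the three points move by at
most `δ ≤ 1/4`, the two legs have length at least `√δ`, and the original angle is in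
`[(3/2)√δ, 1/2 − (3/2)√δ]`, then the angle changes by at most `(3/2)√δ`. -/
theorem arc_stability {d : ℕ} (δ : ℝ) (hδ0 : 0 < δ) (hδ : δ ≤ 1 / 4)
    (y1 y2 y5 y1' y2' y5' : EuclideanSpace ℝ (Fin d))
    (h1 : ‖y1 - y1'‖ ≤ δ) (h2 : ‖y2 - y2'‖ ≤ δ) (h5 : ‖y5 - y5'‖ ≤ δ)
    (hleg1 : Real.sqrt δ ≤ ‖y1 - y5‖) (hleg2 : Real.sqrt δ ≤ ‖y2 - y5‖)
    (hang_lo : (3 / 2) * Real.sqrt δ ≤ Arc (y1 - y5) (y2 - y5))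
    (hang_hi : Arc (y1 - y5) (y2 - y5) ≤ 1 / 2 - (3 / 2) * Real.sqrt δ) :
    |Arc (y1 - y5) (y2 - y5) - Arc (y1' - y5') (y2' - y5')| ≤ (3 / 2) * Real.sqrt δ := by
  have hs0 : 0 < Real.sqrt δ := Real.sqrt_pos.mpr hδ0
  have hdd : Real.sqrt δ * Real.sqrt δ = δ := Real.mul_self_sqrt hδ0.le
  have h36 : δ ≤ 1 / 36 := by
    have hh : (3 / 2) * Real.sqrt δ ≤ 1 / 2 - (3 / 2) * Real.sqrt δ := hang_lo.trans hang_hi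
    nlinarith
  have hs6 : Real.sqrt δ ≤ 1 / 6 := by nlinarith
  have h2d : 2 * δ ≤ (1 / 3) * Real.sqrt δ := by nlinarith
  have hune : y1 - y5 ≠ 0 := by
    intro h0; rw [h0] at hleg1; simp only [norm_zero] at hleg1; linarith
  have hvne : y2 - y5 ≠ 0 := by
    intro h0; rw [h0] at hleg2; simp only [norm_zero] at hleg2; linarith
  have hdu : ‖(y1 - y5) - (y1' - y5')‖ ≤ 2 * δ := by
    have e : (y1 - y5) - (y1' - y5') = (y1 - y1') - (y5 - y5') := by abel
    rw [e]
    calc ‖(y1 - y1') - (y5 - y5')‖ ≤ ‖y1 - y1'‖ + ‖y5 - y5'‖ := norm_sub_le _ _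
      _ ≤ 2 * δ := by linarith
  have hdv : ‖(y2 - y5) - (y2' - y5')‖ ≤ 2 * δ := by
    have e : (y2 - y5) - (y2' - y5') = (y2 - y2') - (y5 - y5') := by abel
    rw [e]
    calc ‖(y2 - y2') - (y5 - y5')‖ ≤ ‖y2 - y2'‖ + ‖y5 - y5'‖ := norm_sub_le _ _
      _ ≤ 2 * δ := by linarith
  have hu'ne : y1' - y5' ≠ 0 := by
    have h := norm_sub_norm_le (y1 - y5) (y1' - y5')
    have : 0 < ‖y1' - y5'‖ := by linarith
    exact norm_pos_iff.mp this
  have hv'ne : y2' - y5' ≠ 0 := by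
    have h := norm_sub_norm_le (y2 - y5) (y2' - y5')
    have : 0 < ‖y2' - y5'‖ := by linarith
    exact norm_pos_iff.mp this
  have habs := my_angle_stability δ hδ0 h36 hleg1 hleg2 hdu hdv
  rw [my_arc_eq hune hvne, my_arc_eq hu'ne hv'ne, ← mul_sub, abs_mul,
    abs_of_nonneg (by positivity : (0:ℝ) ≤ (2 * Real.pi)⁻¹)]
  have hπ : (0:ℝ) < Real.pi := Real.pi_pos
  calc (2 * Real.pi)⁻¹ * |InnerProductGeometry.angle (y1 - y5) (y2 - y5)
        - InnerProductGeometry.angle (y1' - y5') (y2' - y5')|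
      ≤ (2 * Real.pi)⁻¹ * (2 * Real.pi * Real.sqrt δ) :=
        mul_le_mul_of_nonneg_left habs (by positivity)
    _ = Real.sqrt δ := by field_simp
    _ ≤ (3 / 2) * Real.sqrt δ := by nlinarith
end

section
/- Let u, h ∈ ℝ^d with u ≠ 0 and ‖h‖ < ‖u‖. Then the normalized angle between u and u − h satisfies Arc(u, u − h) ≤ (2π)^{-1} arcsin(‖h‖/‖u‖). Moreover, for x ∈ [0,1], arcsin(x) ≤ (π/2) x, so Arc(u, u − h) ≤ (1/4) ‖h‖/‖u‖. -/
lemma arcsin_le_linear {x : ℝ} (h0 : 0 ≤ x) (h1 : x ≤ 1) :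
    Real.arcsin x ≤ (Real.pi / 2) * x := by
  have h := Real.mul_le_sin (Real.arcsin_nonneg.2 h0) (Real.arcsin_le_pi_div_two x)
  rw [Real.sin_arcsin (by linarith) h1] at h
  have hpi := Real.pi_pos
  rw [div_mul_eq_mul_div, div_le_iff₀ hpi] at h
  linarith

/-- for `u ≠ 0` and `‖h‖ < ‖u‖`, the normalized angle between `u` and
`u − h` satisfies `Arc(u, u−h) ≤ (2π)⁻¹ arcsin(‖h‖/‖u‖)`; moreover `arcsin x ≤ (π/2)x` for
`x ∈ [0,1]`, whence `Arc(u, u−h) ≤ (1/4)‖h‖/‖u‖`. -/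
theorem arc_perturbation_bound {d : ℕ} (u h : EuclideanSpace ℝ (Fin d))
    (hu : u ≠ 0) (hh : ‖h‖ < ‖u‖) :
    Arc u (u - h) ≤ (2 * Real.pi)⁻¹ * Real.arcsin (‖h‖ / ‖u‖)
    ∧ (∀ x ∈ Set.Icc (0 : ℝ) 1, Real.arcsin x ≤ (Real.pi / 2) * x)
    ∧ Arc u (u - h) ≤ (1 / 4) * (‖h‖ / ‖u‖) := by
  have hupos : (0:ℝ) < ‖u‖ := norm_pos_iff.2 hu
  have hhn : (0:ℝ) ≤ ‖h‖ := norm_nonneg _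
  set t : ℝ := ‖h‖ / ‖u‖ with ht
  have ht0 : 0 ≤ t := div_nonneg hhn hupos.le
  have ht1 : t ≤ 1 := (div_le_one hupos).2 hh.le
  -- v := u - h is nonzero
  have hvnorm : ‖u‖ - ‖h‖ ≤ ‖u - h‖ := by
    have := norm_sub_norm_le u h
    simpa using this
  have hvpos : (0:ℝ) < ‖u - h‖ := by linarith
  have hv : u - h ≠ 0 := by
    intro h0
    rw [h0, norm_zero] at hvpos; exact lt_irrefl _ hvpos
  -- inner products
  have hcs : (inner ℝ u h : ℝ) ≤ ‖u‖ * ‖h‖ := real_inner_le_norm u h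
  have hinner : (inner ℝ u (u - h) : ℝ) = ‖u‖ ^ 2 - (inner ℝ u h : ℝ) := by
    rw [inner_sub_right, real_inner_self_eq_norm_sq]
  have hnv : ‖u - h‖ ^ 2 = ‖u‖ ^ 2 - 2 * (inner ℝ u h : ℝ) + ‖h‖ ^ 2 := by
    rw [@norm_sub_sq_real]
  have hinnerpos : (0:ℝ) < ‖u‖ ^ 2 - (inner ℝ u h : ℝ) := by nlinarith
  -- key inequality
  have hkey : Real.sqrt (‖u‖ ^ 2 - ‖h‖ ^ 2) * ‖u - h‖ ≤ ‖u‖ ^ 2 - (inner ℝ u h : ℝ) := by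
    have hA : 0 ≤ Real.sqrt (‖u‖ ^ 2 - ‖h‖ ^ 2) * ‖u - h‖ :=
      mul_nonneg (Real.sqrt_nonneg _) hvpos.le
    have hsq : (Real.sqrt (‖u‖ ^ 2 - ‖h‖ ^ 2) * ‖u - h‖) ^ 2
        ≤ (‖u‖ ^ 2 - (inner ℝ u h : ℝ)) ^ 2 := by
      rw [mul_pow, Real.sq_sqrt (by nlinarith : (0:ℝ) ≤ ‖u‖ ^ 2 - ‖h‖ ^ 2), hnv]
      nlinarith [sq_nonneg ((inner ℝ u h : ℝ) - ‖h‖ ^ 2)]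
    calc Real.sqrt (‖u‖ ^ 2 - ‖h‖ ^ 2) * ‖u - h‖
        = Real.sqrt ((Real.sqrt (‖u‖ ^ 2 - ‖h‖ ^ 2) * ‖u - h‖) ^ 2) := (Real.sqrt_sq hA).symm
      _ ≤ Real.sqrt ((‖u‖ ^ 2 - (inner ℝ u h : ℝ)) ^ 2) := Real.sqrt_le_sqrt hsq
      _ = ‖u‖ ^ 2 - (inner ℝ u h : ℝ) := Real.sqrt_sq hinnerpos.le
  -- cos bound: √(1 - t²) ≤ inner / (‖u‖‖v‖)
  have hsqrt : Real.sqrt (1 - t ^ 2) = Real.sqrt (‖u‖ ^ 2 - ‖h‖ ^ 2) / ‖u‖ := by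
    rw [ht, div_pow, ← Real.sqrt_sq hupos.le]
    rw [← Real.sqrt_div' _ (by positivity)]
    congr 1
    field_simp
    rw [Real.sq_sqrt (by positivity)]
  have hcos : Real.sqrt (1 - t ^ 2) ≤ (inner ℝ u (u - h) : ℝ) / (‖u‖ * ‖u - h‖) := by
    rw [hsqrt, hinner, div_le_div_iff₀ hupos (by positivity)]
    calc Real.sqrt (‖u‖ ^ 2 - ‖h‖ ^ 2) * (‖u‖ * ‖u - h‖)
        = (Real.sqrt (‖u‖ ^ 2 - ‖h‖ ^ 2) * ‖u - h‖) * ‖u‖ := by ring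
      _ ≤ (‖u‖ ^ 2 - (inner ℝ u h : ℝ)) * ‖u‖ := by
          exact mul_le_mul_of_nonneg_right hkey hupos.le
  -- arccos(√(1-t²)) = arcsin t
  have harc : Real.arccos (Real.sqrt (1 - t ^ 2)) = Real.arcsin t := by
    rw [Real.arccos_eq_arcsin (Real.sqrt_nonneg _), Real.sq_sqrt (by nlinarith : (0:ℝ) ≤ 1 - t ^ 2)]
    congr 1
    rw [show (1 : ℝ) - (1 - t ^ 2) = t ^ 2 by ring, Real.sqrt_sq ht0]
  have hmain : Real.arccos ((inner ℝ u (u - h) : ℝ) / (‖u‖ * ‖u - h‖)) ≤ Real.arcsin t := by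
    rw [← harc, Real.arccos_eq_pi_div_two_sub_arcsin, Real.arccos_eq_pi_div_two_sub_arcsin]
    have := Real.monotone_arcsin hcos
    linarith
  have hArc : Arc u (u - h) = (2 * Real.pi)⁻¹
      * Real.arccos ((inner ℝ u (u - h) : ℝ) / (‖u‖ * ‖u - h‖)) := by
    rw [Arc, if_pos ⟨hu, hv⟩]
  have hpi := Real.pi_pos
  have h2pi : (0:ℝ) < (2 * Real.pi)⁻¹ := by positivity
  have first : Arc u (u - h) ≤ (2 * Real.pi)⁻¹ * Real.arcsin t := by
    rw [hArc]
    exact mul_le_mul_of_nonneg_left hmain h2pi.le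
  refine ⟨first, fun x hx => arcsin_le_linear hx.1 hx.2, ?_⟩
  calc Arc u (u - h) ≤ (2 * Real.pi)⁻¹ * Real.arcsin t := first
    _ ≤ (2 * Real.pi)⁻¹ * ((Real.pi / 2) * t) :=
        mul_le_mul_of_nonneg_left (arcsin_le_linear ht0 ht1) h2pi.le
    _ = (1 / 4) * t := by field_simp; ring
end
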